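/- arXiv:1511.01509 — 5 statements merged into one kernel-verified Lean document; each statement's English description precedes it below -/
import Mathlib

section
/- Let φ : ℝⁿ → ℝⁿ be continuous with φ(0) = 0, and suppose there exists a twice continuously differentiable V : ℝⁿ → ℝ and positive constants a₁, a₂, a₃, a₄ such that for all x ∈ ℝⁿ: a₁I ≤ ∇²V(x) ≤ a₂I, ∇V(x)·φ(x) ≤ −a₃‖x‖², and ‖φ(x)‖ ≤ a₄‖x‖, and V(0) = 0 with V(x) > 0 for x ≠ 0. Then the origin is globally exponentially stable for the continuous-time system ẋ = φ(x): there exist M, λ > 0 such that every solution t ↦ x(t) of ẋ(t) = φ(x(t)) satisfies ‖x(t)‖ ≤ M‖x(0)‖e^(−λt) for all t ≥ 0. -/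
open RealInnerProductSpace

/-- Helper: if `g' = g₁`, `g₁' = g₂`, `g₁ 0 = 0` and `c ≤ g₂`, then `g 0 + c/2 ≤ g 1`. -/
lemma quad_lower_aux (g g₁ g₂ : ℝ → ℝ) (c : ℝ)
    (hg : ∀ t, HasDerivAt g (g₁ t) t)
    (hg₁ : ∀ t, HasDerivAt g₁ (g₂ t) t)
    (h0 : g₁ 0 = 0) (hb : ∀ t, c ≤ g₂ t) :
    g 0 + c / 2 ≤ g 1 := by
  -- p t = g₁ t - c * t is monotone
  have hp : ∀ t, HasDerivAt (fun t => g₁ t - c * t) (g₂ t - c) t := fun t => by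
    exact ((hg₁ t).sub ((hasDerivAt_id t).const_mul c)).congr_deriv (by ring)
  have hpmono : Monotone (fun t => g₁ t - c * t) := by
    apply monotone_of_deriv_nonneg (fun t => (hp t).differentiableAt)
    intro t
    rw [(hp t).deriv]
    linarith [hb t]
  have hg₁ge : ∀ t : ℝ, 0 ≤ t → c * t ≤ g₁ t := by
    intro t ht
    have := hpmono ht
    simp only [h0, mul_zero, sub_zero, zero_sub] at this
    linarith
  -- q t = g t - c/2 * t^2 is monotone on [0, ∞)
  have hq : ∀ t, HasDerivAt (fun t => g t - c / 2 * t ^ 2) (g₁ t - c / 2 * (2 * t ^ 1)) t :=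
    fun t => (hg t).sub ((hasDerivAt_pow 2 t).const_mul (c / 2))
  have hqmono : MonotoneOn (fun t => g t - c / 2 * t ^ 2) (Set.Ici (0 : ℝ)) := by
    apply monotoneOn_of_deriv_nonneg (convex_Ici 0)
    · exact fun t _ => (hq t).continuousAt.continuousWithinAt
    · exact fun t _ => (hq t).differentiableAt.differentiableWithinAt
    · intro t ht
      rw [interior_Ici] at ht
      rw [(hq t).deriv]
      have := hg₁ge t (le_of_lt ht)
      have : c * t ≤ g₁ t := this
      nlinarith
  have := hqmono (Set.self_mem_Ici) (by norm_num : (1:ℝ) ∈ Set.Ici (0:ℝ)) zero_le_one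
  simp only at this
  nlinarith

/-- Global exponential stability of the continuous-time system
`ẋ = φ(x)` under the Lyapunov-type hypotheses of Theorem 1(a). -/
theorem stmt_0 {n : ℕ}
    (φ : EuclideanSpace ℝ (Fin n) → EuclideanSpace ℝ (Fin n))
    (hφcont : Continuous φ) (hφ0 : φ 0 = 0)
    (V : EuclideanSpace ℝ (Fin n) → ℝ) (hV : ContDiff ℝ 2 V)
    (a₁ a₂ a₃ a₄ : ℝ) (ha₁ : 0 < a₁) (ha₂ : 0 < a₂) (ha₃ : 0 < a₃) (ha₄ : 0 < a₄)
    (hHess : ∀ x v : EuclideanSpace ℝ (Fin n),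
      a₁ * ‖v‖ ^ 2 ≤ iteratedFDeriv ℝ 2 V x ![v, v] ∧
      iteratedFDeriv ℝ 2 V x ![v, v] ≤ a₂ * ‖v‖ ^ 2)
    (hdecr : ∀ x, ⟪gradient V x, φ x⟫ ≤ -a₃ * ‖x‖ ^ 2)
    (hlin : ∀ x, ‖φ x‖ ≤ a₄ * ‖x‖)
    (hV0 : V 0 = 0) (hVpos : ∀ x, x ≠ 0 → 0 < V x) :
    ∃ M lam : ℝ, 0 < M ∧ 0 < lam ∧
      ∀ x : ℝ → EuclideanSpace ℝ (Fin n),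
        (∀ t : ℝ, 0 ≤ t → HasDerivAt x (φ (x t)) t) →
        ∀ t : ℝ, 0 ≤ t → ‖x t‖ ≤ M * ‖x 0‖ * Real.exp (-lam * t) := by
  have hVdiff : Differentiable ℝ V := hV.differentiable (by norm_num)
  have hDdiff : Differentiable ℝ (fderiv ℝ V) :=
    (hV.fderiv_right (m := 1) (by norm_num)).differentiable (by norm_num)
  -- gradient at 0 vanishes
  have hVnonneg : ∀ y, 0 ≤ V y := by
    intro y
    rcases eq_or_ne y 0 with h | h
    · rw [h, hV0]
    · exact (hVpos y h).le
  have hfd0 : fderiv ℝ V 0 = 0 := by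
    apply IsLocalMin.fderiv_eq_zero
    apply Filter.Eventually.of_forall
    intro y
    rw [hV0]; exact hVnonneg y
  -- fderiv in terms of gradient
  have hfgrad : ∀ y v, fderiv ℝ V y v = ⟪gradient V y, v⟫ := by
    intro y v
    have h1 : HasFDerivAt V (InnerProductSpace.toDual ℝ (EuclideanSpace ℝ (Fin n))
        (gradient V y)) y := (hVdiff y).hasGradientAt.hasFDerivAt
    rw [h1.fderiv]
    exact InnerProductSpace.toDual_apply_apply
  -- quadratic bounds on V
  have quad : ∀ y, a₁ / 2 * ‖y‖ ^ 2 ≤ V y ∧ V y ≤ a₂ / 2 * ‖y‖ ^ 2 := by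
    intro y
    set g : ℝ → ℝ := fun t => V (t • y) with hgdef
    set g₁ : ℝ → ℝ := fun t => fderiv ℝ V (t • y) y with hg₁def
    set g₂ : ℝ → ℝ := fun t => fderiv ℝ (fderiv ℝ V) (t • y) y y with hg₂def
    have hline : ∀ t : ℝ, HasDerivAt (fun s : ℝ => s • y) y t := by
      intro t
      simpa using (hasDerivAt_id t).smul_const y
    have hg : ∀ t, HasDerivAt g (g₁ t) t := fun t =>
      (hVdiff (t • y)).hasFDerivAt.comp_hasDerivAt t (hline t)
    have hg₁ : ∀ t, HasDerivAt g₁ (g₂ t) t := by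
      intro t
      have h1 : HasDerivAt (fun s : ℝ => fderiv ℝ V (s • y))
          (fderiv ℝ (fderiv ℝ V) (t • y) y) t :=
        (hDdiff (t • y)).hasFDerivAt.comp_hasDerivAt t (hline t)
      have h2 := h1.clm_apply (hasDerivAt_const t y)
      simpa using h2
    have h0 : g₁ 0 = 0 := by
      simp [hg₁def, hfd0]
    have hItw : ∀ t, g₂ t = iteratedFDeriv ℝ 2 V (t • y) ![y, y] := by
      intro t
      rw [iteratedFDeriv_two_apply]
      simp [hg₂def]
    have hlow : ∀ t, a₁ * ‖y‖ ^ 2 ≤ g₂ t := by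
      intro t; rw [hItw t]; exact (hHess (t • y) y).1
    have hhigh : ∀ t, g₂ t ≤ a₂ * ‖y‖ ^ 2 := by
      intro t; rw [hItw t]; exact (hHess (t • y) y).2
    have g0 : g 0 = 0 := by simp [hgdef, hV0]
    have g1 : g 1 = V y := by simp [hgdef]
    constructor
    · have := quad_lower_aux g g₁ g₂ (a₁ * ‖y‖ ^ 2) hg hg₁ h0 hlow
      rw [g0, g1] at this; linarith
    · have := quad_lower_aux (fun t => -g t) (fun t => -g₁ t) (fun t => -g₂ t)
        (-(a₂ * ‖y‖ ^ 2)) (fun t => (hg t).neg) (fun t => (hg₁ t).neg)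
        (by simp [h0]) (fun t => by simpa using neg_le_neg (hhigh t))
      simp only [g0, g1] at this; linarith
  -- constants
  refine ⟨Real.sqrt (a₂ / a₁), a₃ / a₂, Real.sqrt_pos.mpr (div_pos ha₂ ha₁),
    div_pos ha₃ ha₂, ?_⟩
  intro x hx t ht
  set c : ℝ := 2 * (a₃ / a₂) with hcdef
  have hc : 0 < c := by positivity
  -- W s = V (x s) * exp (c s) is antitone on [0, ∞)
  set W : ℝ → ℝ := fun s => V (x s) * Real.exp (c * s) with hWdef
  have hW : ∀ s : ℝ, 0 ≤ s → HasDerivAt W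
      (fderiv ℝ V (x s) (φ (x s)) * Real.exp (c * s)
        + V (x s) * (Real.exp (c * s) * c)) s := by
    intro s hs
    have := ((hVdiff (x s)).hasFDerivAt.comp_hasDerivAt s (hx s hs)).mul
      (((hasDerivAt_id s).const_mul c).exp)
    exact this.congr_deriv (by simp)
  have hWanti : AntitoneOn W (Set.Ici (0 : ℝ)) := by
    apply antitoneOn_of_deriv_nonpos (convex_Ici 0)
    · exact fun s hs => (hW s hs).continuousAt.continuousWithinAt
    · intro s hs
      rw [interior_Ici] at hs
      exact (hW s (le_of_lt hs)).differentiableAt.differentiableWithinAt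
    · intro s hs
      rw [interior_Ici] at hs
      rw [(hW s (le_of_lt hs)).deriv]
      have hd : fderiv ℝ V (x s) (φ (x s)) ≤ -a₃ * ‖x s‖ ^ 2 := by
        rw [hfgrad]; exact hdecr (x s)
      have hub : V (x s) ≤ a₂ / 2 * ‖x s‖ ^ 2 := (quad (x s)).2
      have hexp : (0:ℝ) < Real.exp (c * s) := Real.exp_pos _
      have key : fderiv ℝ V (x s) (φ (x s)) + V (x s) * c ≤ 0 := by
        have : V (x s) * c ≤ a₂ / 2 * ‖x s‖ ^ 2 * c := by
          apply mul_le_mul_of_nonneg_right hub hc.le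
        have hcc : a₂ / 2 * ‖x s‖ ^ 2 * c = a₃ * ‖x s‖ ^ 2 := by
          rw [hcdef]; field_simp
        nlinarith
      nlinarith
  have hWle := hWanti Set.self_mem_Ici ht ht
  have hW0 : W 0 = V (x 0) := by simp [hWdef]
  rw [hW0] at hWle
  -- convert to norm bound
  have h1 : a₁ / 2 * ‖x t‖ ^ 2 ≤ V (x t) := (quad (x t)).1
  have h2 : V (x 0) ≤ a₂ / 2 * ‖x 0‖ ^ 2 := (quad (x 0)).2
  have hexp : (0:ℝ) < Real.exp (c * t) := Real.exp_pos _
  have hVxt : V (x t) ≤ a₂ / 2 * ‖x 0‖ ^ 2 * Real.exp (-(c * t)) := by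
    have h3 : V (x t) * Real.exp (c * t) ≤ a₂ / 2 * ‖x 0‖ ^ 2 := le_trans hWle h2
    rw [Real.exp_neg]
    calc V (x t) = V (x t) * Real.exp (c * t) * (Real.exp (c * t))⁻¹ := by field_simp
      _ ≤ a₂ / 2 * ‖x 0‖ ^ 2 * (Real.exp (c * t))⁻¹ :=
          mul_le_mul_of_nonneg_right h3 (inv_nonneg.mpr hexp.le)
  have hsq : ‖x t‖ ^ 2 ≤ (Real.sqrt (a₂ / a₁) * ‖x 0‖ * Real.exp (-(a₃ / a₂) * t)) ^ 2 := by
    have hM : Real.sqrt (a₂ / a₁) ^ 2 = a₂ / a₁ :=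
      Real.sq_sqrt (le_of_lt (div_pos ha₂ ha₁))
    have hE : Real.exp (-(a₃ / a₂) * t) ^ 2 = Real.exp (-(c * t)) := by
      rw [← Real.exp_nat_mul]
      congr 1
      rw [hcdef]; ring
    have expand : (Real.sqrt (a₂ / a₁) * ‖x 0‖ * Real.exp (-(a₃ / a₂) * t)) ^ 2
        = (a₂ / a₁) * ‖x 0‖ ^ 2 * Real.exp (-(c * t)) := by
      rw [mul_pow, mul_pow, hM, hE]
    rw [expand]
    have step : a₁ / 2 * ‖x t‖ ^ 2 ≤ a₂ / 2 * ‖x 0‖ ^ 2 * Real.exp (-(c * t)) :=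
      le_trans h1 hVxt
    have : ‖x t‖ ^ 2 ≤ (2 / a₁) * (a₂ / 2 * ‖x 0‖ ^ 2 * Real.exp (-(c * t))) := by
      rw [← mul_le_mul_iff_right₀ (half_pos ha₁)]
      calc a₁ / 2 * ‖x t‖ ^ 2 ≤ a₂ / 2 * ‖x 0‖ ^ 2 * Real.exp (-(c * t)) := step
        _ = a₁ / 2 * ((2 / a₁) * (a₂ / 2 * ‖x 0‖ ^ 2 * Real.exp (-(c * t)))) := by
            field_simp
    calc ‖x t‖ ^ 2 ≤ (2 / a₁) * (a₂ / 2 * ‖x 0‖ ^ 2 * Real.exp (-(c * t))) := this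
      _ = (a₂ / a₁) * ‖x 0‖ ^ 2 * Real.exp (-(c * t)) := by field_simp
  have hRHS : 0 ≤ Real.sqrt (a₂ / a₁) * ‖x 0‖ * Real.exp (-(a₃ / a₂) * t) := by
    positivity
  calc ‖x t‖ = Real.sqrt (‖x t‖ ^ 2) := by rw [Real.sqrt_sq (norm_nonneg _)]
    _ ≤ Real.sqrt ((Real.sqrt (a₂ / a₁) * ‖x 0‖ * Real.exp (-(a₃ / a₂) * t)) ^ 2) :=
        Real.sqrt_le_sqrt hsq
    _ = Real.sqrt (a₂ / a₁) * ‖x 0‖ * Real.exp (-(a₃ / a₂) * t) := Real.sqrt_sq hRHS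
end

section
/- Let φ : ℝⁿ → ℝⁿ be continuous with φ(0) = 0, and suppose there exists a twice continuously differentiable V : ℝⁿ → ℝ and positive constants a₁, a₂, a₃, a₄ such that for all x ∈ ℝⁿ: a₁I ≤ ∇²V(x) ≤ a₂I, ∇V(x)·φ(x) ≤ −a₃‖x‖², ‖φ(x)‖ ≤ a₄‖x‖, and V(0) = 0 with V(x) > 0 for x ≠ 0. Then for every ε with 0 < ε < 2a₃/(a₂a₄²), the origin is globally exponentially stable for the forward-Euler discretization x(k+1) = x(k) + εφ(x(k)): there exist M > 0 and μ ∈ (0,1) such that every trajectory satisfies ‖x(k)‖ ≤ M‖x(0)‖μᵏ for all k ≥ 0 and all initial conditions x(0) ∈ ℝⁿ. -/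
open RealInnerProductSpace

open InnerProductSpace

section Aux

variable {E : Type*} [NormedAddCommGroup E] [InnerProductSpace ℝ E] [CompleteSpace E]

lemma key_ub' (V : E → ℝ) (hV : ContDiff ℝ 2 V) (a : ℝ) (x u : E)
    (hub : ∀ y : E, iteratedFDeriv ℝ 2 V y ![u, u] ≤ a * ‖u‖ ^ 2) :
    V (x + u) ≤ V x + ⟪gradient V x, u⟫ + a / 2 * ‖u‖ ^ 2 := by
  have hVd : Differentiable ℝ V := hV.differentiable two_ne_zero
  have hFd : Differentiable ℝ (fderiv ℝ V) :=
    (hV.fderiv_right (m := 1) (le_refl _)).differentiable one_ne_zero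
  -- the line
  have hc : ∀ t : ℝ, HasDerivAt (fun t : ℝ => x + t • u) u t := fun t => by
    simpa using ((hasDerivAt_id t).smul_const u).const_add x
  set g : ℝ → ℝ := fun t => V (x + t • u) with hg
  set g1 : ℝ → ℝ := fun t => (fderiv ℝ V (x + t • u)) u with hg1
  have hgd : ∀ t, HasDerivAt g (g1 t) t := fun t => by
    exact ((hVd (x + t • u)).hasFDerivAt.comp_hasDerivAt t (hc t))
  have hg1d : ∀ t, HasDerivAt g1 (iteratedFDeriv ℝ 2 V (x + t • u) ![u, u]) t := by
    intro t
    have h1 : HasDerivAt (fun s : ℝ => fderiv ℝ V (x + s • u))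
        (fderiv ℝ (fderiv ℝ V) (x + t • u) u) t :=
      (hFd (x + t • u)).hasFDerivAt.comp_hasDerivAt t (hc t)
    have h2 := (ContinuousLinearMap.apply ℝ ℝ u).hasFDerivAt.comp_hasDerivAt t h1
    simp only [iteratedFDeriv_two_apply]
    exact h2
  set h1 : ℝ → ℝ := fun t => g1 t - g1 0 - a * ‖u‖ ^ 2 * t with hh1
  have hh1d : ∀ t, HasDerivAt h1 (iteratedFDeriv ℝ 2 V (x + t • u) ![u, u] - a * ‖u‖ ^ 2) t := by
    intro t
    have h3 := ((hg1d t).sub_const (g1 0)).sub ((hasDerivAt_id t).const_mul (a * ‖u‖ ^ 2))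
    simp only [id, mul_one] at h3
    exact h3
  have hh1anti : Antitone h1 := by
    refine antitone_of_deriv_nonpos (fun t => (hh1d t).differentiableAt) (fun t => ?_)
    rw [(hh1d t).deriv]
    linarith [hub (x + t • u)]
  have hh1le : ∀ t : ℝ, 0 ≤ t → h1 t ≤ 0 := by
    intro t ht
    have := hh1anti ht
    simpa [hh1] using this
  set h : ℝ → ℝ := fun t => g t - g 0 - g1 0 * t - a / 2 * ‖u‖ ^ 2 * t ^ 2 with hh
  have hhd : ∀ t, HasDerivAt h (h1 t) t := by
    intro t
    have h2 := (((hgd t).sub_const (g 0)).sub ((hasDerivAt_id t).const_mul (g1 0))).sub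
        (((hasDerivAt_pow 2 t)).const_mul (a / 2 * ‖u‖ ^ 2))
    have h3 : h1 t = g1 t - g1 0 * 1 - a / 2 * ‖u‖ ^ 2 * (↑2 * t ^ (2 - 1)) := by
      simp only [hh1]; norm_num; ring
    rw [h3]; exact h2
  have hhanti : AntitoneOn h (Set.Ici 0) := by
    refine antitoneOn_of_deriv_nonpos (convex_Ici 0)
      (Continuous.continuousOn (by fun_prop)) ?_ ?_
    · intro t _; exact (hhd t).differentiableAt.differentiableWithinAt
    · intro t ht
      rw [(hhd t).deriv]
      exact hh1le t (le_of_lt (by simpa using ht))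
  have h10 : h 1 ≤ h 0 := hhanti (Set.mem_Ici.2 le_rfl) (Set.mem_Ici.2 zero_le_one) zero_le_one
  have hgrad : ⟪gradient V x, u⟫ = (fderiv ℝ V x) u := toDual_symm_apply
  have hg0 : g 0 = V x := by simp [hg]
  have hg10 : g1 0 = (fderiv ℝ V x) u := by simp [hg1]
  have h0 : h 0 = 0 := by simp [hh, hg0]
  have h1v : h 1 = V (x + u) - V x - g1 0 - a / 2 * ‖u‖ ^ 2 := by simp [hh, hg, hg0]
  rw [h0, h1v] at h10
  rw [hgrad, ← hg10]
  linarith [h10]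

lemma key_lb' (V : E → ℝ) (hV : ContDiff ℝ 2 V) (a : ℝ) (x u : E)
    (hlb : ∀ y : E, a * ‖u‖ ^ 2 ≤ iteratedFDeriv ℝ 2 V y ![u, u]) :
    V x + ⟪gradient V x, u⟫ + a / 2 * ‖u‖ ^ 2 ≤ V (x + u) := by
  have := key_ub' (fun y => -V y) (hV.neg) (-a) x u (fun y => by
    rw [show (fun y => -V y) = -V from rfl]
    simp only [iteratedFDeriv_neg_apply, ContinuousMultilinearMap.neg_apply]
    linarith [hlb y])
  have hgrad : gradient (fun y => -V y) x = -gradient V x := by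
    unfold gradient
    rw [fderiv_fun_neg, map_neg]
  rw [hgrad] at this
  simp only [inner_neg_left] at this
  linarith

end Aux

set_option maxHeartbeats 1000000 in
/-- Global exponential stability of the forward-Euler discretization
`x(k+1) = x(k) + ε φ(x(k))` for every step size `0 < ε < 2a₃/(a₂a₄²)`. -/
theorem stmt_1 {n : ℕ}
    (φ : EuclideanSpace ℝ (Fin n) → EuclideanSpace ℝ (Fin n))
    (hφcont : Continuous φ) (hφ0 : φ 0 = 0)
    (V : EuclideanSpace ℝ (Fin n) → ℝ) (hV : ContDiff ℝ 2 V)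
    (a₁ a₂ a₃ a₄ : ℝ) (ha₁ : 0 < a₁) (ha₂ : 0 < a₂) (ha₃ : 0 < a₃) (ha₄ : 0 < a₄)
    (hHess : ∀ x v : EuclideanSpace ℝ (Fin n),
      a₁ * ‖v‖ ^ 2 ≤ iteratedFDeriv ℝ 2 V x ![v, v] ∧
      iteratedFDeriv ℝ 2 V x ![v, v] ≤ a₂ * ‖v‖ ^ 2)
    (hdecr : ∀ x, ⟪gradient V x, φ x⟫ ≤ -a₃ * ‖x‖ ^ 2)
    (hlin : ∀ x, ‖φ x‖ ≤ a₄ * ‖x‖)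
    (hV0 : V 0 = 0) (hVpos : ∀ x, x ≠ 0 → 0 < V x)
    (ε : ℝ) (hε : 0 < ε) (hε' : ε < 2 * a₃ / (a₂ * a₄ ^ 2)) :
    ∃ M μ : ℝ, 0 < M ∧ 0 < μ ∧ μ < 1 ∧
      ∀ x : ℕ → EuclideanSpace ℝ (Fin n),
        (∀ k : ℕ, x (k + 1) = x k + ε • φ (x k)) →
        ∀ k : ℕ, ‖x k‖ ≤ M * ‖x 0‖ * μ ^ k := by
  -- gradient at 0 vanishes
  have hmin : IsLocalMin V 0 := by
    refine Filter.Eventually.of_forall fun y => ?_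
    rcases eq_or_ne y 0 with rfl | hy
    · exact le_refl _
    · exact hV0.le.trans (hVpos y hy).le
  have hgrad0 : gradient V 0 = 0 := by
    unfold gradient
    rw [hmin.fderiv_eq_zero, map_zero]
  -- quadratic bounds on V
  have hVlb : ∀ x : EuclideanSpace ℝ (Fin n), a₁ / 2 * ‖x‖ ^ 2 ≤ V x := by
    intro x
    have := key_lb' V hV a₁ 0 x (fun y => (hHess y x).1)
    simpa [hV0, hgrad0] using this
  have hVub : ∀ x : EuclideanSpace ℝ (Fin n), V x ≤ a₂ / 2 * ‖x‖ ^ 2 := by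
    intro x
    have := key_ub' V hV a₂ 0 x (fun y => (hHess y x).2)
    simpa [hV0, hgrad0] using this
  -- one-step decrease
  set c : ℝ := ε * a₃ - ε ^ 2 * a₂ * a₄ ^ 2 / 2 with hc
  have hεbig : ε * (a₂ * a₄ ^ 2) < 2 * a₃ := by
    rwa [lt_div_iff₀ (by positivity)] at hε'
  have hcpos : 0 < c := by
    have hp : 0 < ε * (2 * a₃ - ε * (a₂ * a₄ ^ 2)) := mul_pos hε (by linarith)
    rw [hc]; nlinarith [hp]
  clear_value c
  set ρ : ℝ := max (1 - 2 * c / a₂) (1 / 2) with hρ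
  have hρpos : 0 < ρ := lt_of_lt_of_le one_half_pos (le_max_right _ _)
  have hρlt : ρ < 1 := by
    rw [hρ]
    refine max_lt ?_ (by norm_num)
    have : 0 < 2 * c / a₂ := by positivity
    linarith
  clear_value ρ
  have hstep : ∀ x : EuclideanSpace ℝ (Fin n), V (x + ε • φ x) ≤ ρ * V x := by
    intro x
    have hub := key_ub' V hV a₂ x (ε • φ x) (fun y => (hHess y (ε • φ x)).2)
    have hnorm : ‖ε • φ x‖ ^ 2 ≤ ε ^ 2 * a₄ ^ 2 * ‖x‖ ^ 2 := by
      rw [norm_smul]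
      have h1 := hlin x
      have h2 : ‖φ x‖ ≥ 0 := norm_nonneg _
      have h3 : ‖x‖ ≥ 0 := norm_nonneg _
      simp only [Real.norm_eq_abs, abs_of_pos hε]
      have h4 : ‖φ x‖ ^ 2 ≤ a₄ ^ 2 * ‖x‖ ^ 2 := by nlinarith
      calc (ε * ‖φ x‖) ^ 2 = ε ^ 2 * ‖φ x‖ ^ 2 := by ring
        _ ≤ ε ^ 2 * (a₄ ^ 2 * ‖x‖ ^ 2) := by
            exact mul_le_mul_of_nonneg_left h4 (sq_nonneg ε)
        _ = ε ^ 2 * a₄ ^ 2 * ‖x‖ ^ 2 := by ring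
    have hinner : ⟪gradient V x, ε • φ x⟫ = ε * ⟪gradient V x, φ x⟫ :=
      real_inner_smul_right _ _ _
    have hd := hdecr x
    have h1 : V (x + ε • φ x) ≤ V x - c * ‖x‖ ^ 2 := by
      rw [hinner] at hub
      have h5 : ε * ⟪gradient V x, φ x⟫ ≤ ε * (-a₃ * ‖x‖ ^ 2) :=
        mul_le_mul_of_nonneg_left hd hε.le
      have h6 := mul_le_mul_of_nonneg_left hnorm (by positivity : (0:ℝ) ≤ a₂ / 2)
      rw [hc]
      nlinarith [hub, h5, h6]
    have h2 : 2 / a₂ * V x ≤ ‖x‖ ^ 2 := by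
      have := hVub x
      rw [div_mul_eq_mul_div, div_le_iff₀ ha₂]
      linarith
    have h3 : V (x + ε • φ x) ≤ (1 - 2 * c / a₂) * V x := by
      have hcc : c * (2 / a₂ * V x) ≤ c * ‖x‖ ^ 2 := mul_le_mul_of_nonneg_left h2 hcpos.le
      have he : (1 - 2 * c / a₂) * V x = V x - c * (2 / a₂ * V x) := by ring
      calc V (x + ε • φ x) ≤ V x - c * ‖x‖ ^ 2 := h1
        _ ≤ V x - c * (2 / a₂ * V x) := by linarith
        _ = (1 - 2 * c / a₂) * V x := he.symm
    have hVnn : 0 ≤ V x := le_trans (by positivity) (hVlb x)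
    calc V (x + ε • φ x) ≤ (1 - 2 * c / a₂) * V x := h3
      _ ≤ ρ * V x := by
          rw [hρ]
          exact mul_le_mul_of_nonneg_right (le_max_left _ _) hVnn
  -- conclude
  refine ⟨Real.sqrt (a₂ / a₁), Real.sqrt ρ, Real.sqrt_pos.2 (by positivity),
    Real.sqrt_pos.2 hρpos, ?_, ?_⟩
  · have := Real.sqrt_lt_sqrt hρpos.le hρlt
    simpa using this
  · intro x hx k
    have hVk : ∀ k, V (x k) ≤ ρ ^ k * V (x 0) := by
      intro k
      induction k with
      | zero => simp
      | succ k ih =>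
        have := hstep (x k)
        rw [← hx k] at this
        calc V (x (k + 1)) ≤ ρ * V (x k) := this
          _ ≤ ρ * (ρ ^ k * V (x 0)) := mul_le_mul_of_nonneg_left ih hρpos.le
          _ = ρ ^ (k + 1) * V (x 0) := by ring
    have h1 : a₁ / 2 * ‖x k‖ ^ 2 ≤ ρ ^ k * (a₂ / 2 * ‖x 0‖ ^ 2) := by
      refine le_trans (hVlb (x k)) (le_trans (hVk k) ?_)
      exact mul_le_mul_of_nonneg_left (hVub (x 0)) (by positivity)
    have h2 : ‖x k‖ ^ 2 ≤ (Real.sqrt (a₂ / a₁) * ‖x 0‖ * Real.sqrt ρ ^ k) ^ 2 := by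
      have hM : Real.sqrt (a₂ / a₁) ^ 2 = a₂ / a₁ := Real.sq_sqrt (by positivity)
      have hμ : Real.sqrt ρ ^ 2 = ρ := Real.sq_sqrt hρpos.le
      have : (Real.sqrt (a₂ / a₁) * ‖x 0‖ * Real.sqrt ρ ^ k) ^ 2
          = (a₂ / a₁) * ‖x 0‖ ^ 2 * ρ ^ k := by
        have e1 : (Real.sqrt ρ ^ k) ^ 2 = ρ ^ k := by
          rw [← pow_mul, mul_comm, pow_mul, hμ]
        rw [mul_pow, mul_pow, e1, hM]
      rw [this]
      rw [div_mul_eq_mul_div, div_mul_eq_mul_div, le_div_iff₀ ha₁]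
      nlinarith
    have h3 := Real.sqrt_le_sqrt h2
    rwa [Real.sqrt_sq (norm_nonneg _), Real.sqrt_sq (by positivity)] at h3
end

section
/- Under the Newton–Raphson setup, the function V_NR(x) := f̄(x) satisfies, for all x ∈ ℝⁿ: (i) cI ≤ ∇²V_NR(x) ≤ mI; (ii) ‖φ_NR(x)‖ ≤ (m/c)‖x‖; and (iii) ∇V_NR(x)·φ_NR(x) ≤ −(c²/m)‖x‖². -/
open RealInnerProductSpace

private lemma sq_le_of_quad (a b d : ℝ) (h : ∀ t : ℝ, 0 ≤ a + 2*t*b + t^2*d) :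
    b^2 ≤ a*d := by
  have hd := discrim_le_zero (a := d) (b := 2*b) (c := a) (fun t => by nlinarith [h t])
  simp only [discrim] at hd
  nlinarith

/-- Quantitative bounds for `V_NR := f̄` in the Newton–Raphson setup:
(i) `cI ≤ ∇²V_NR ≤ mI`, (ii) `‖φ_NR(x)‖ ≤ (m/c)‖x‖`,
(iii) `∇V_NR(x)·φ_NR(x) ≤ −(c²/m)‖x‖²`. -/
theorem stmt_5 {n : ℕ} (c m : ℝ) (hc : 0 < c) (hc1 : c ≤ 1) (hm : 1 ≤ m)
    (f : EuclideanSpace ℝ (Fin n) → ℝ) (hf : ContDiff ℝ 3 f)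
    (hf0 : f 0 = 0) (hgrad0 : gradient f 0 = 0)
    (hHess : ∀ x v : EuclideanSpace ℝ (Fin n),
      c * ‖v‖ ^ 2 ≤ iteratedFDeriv ℝ 2 f x ![v, v] ∧
      iteratedFDeriv ℝ 2 f x ![v, v] ≤ m * ‖v‖ ^ 2)
    (h : EuclideanSpace ℝ (Fin n) → Matrix (Fin n) (Fin n) ℝ)
    (hsym : ∀ x, (h x).IsHermitian)
    (hbnd : ∀ x, (h x - c • (1 : Matrix (Fin n) (Fin n) ℝ)).PosSemidef ∧
      (m • (1 : Matrix (Fin n) (Fin n) ℝ) - h x).PosSemidef)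
    (φNR : EuclideanSpace ℝ (Fin n) → EuclideanSpace ℝ (Fin n))
    (hφNR : ∀ x, φNR x = -(Matrix.toEuclideanLin (h x)⁻¹ (gradient f x))) :
    (∀ x v : EuclideanSpace ℝ (Fin n),
        c * ‖v‖ ^ 2 ≤ iteratedFDeriv ℝ 2 f x ![v, v] ∧
        iteratedFDeriv ℝ 2 f x ![v, v] ≤ m * ‖v‖ ^ 2) ∧
    (∀ x, ‖φNR x‖ ≤ m / c * ‖x‖) ∧
    (∀ x, ⟪gradient f x, φNR x⟫ ≤ -(c ^ 2 / m) * ‖x‖ ^ 2) := by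
  have hm0 : (0:ℝ) < m := lt_of_lt_of_le one_pos hm
  -- basic smoothness
  have hdf : Differentiable ℝ f := hf.differentiable (by norm_num)
  have hf' : ContDiff ℝ 2 (fderiv ℝ f) := hf.fderiv_right (by norm_num)
  have hdf' : Differentiable ℝ (fderiv ℝ f) := hf'.differentiable (by norm_num)
  -- second derivative
  set f'' : EuclideanSpace ℝ (Fin n) → EuclideanSpace ℝ (Fin n) →L[ℝ] EuclideanSpace ℝ (Fin n) →L[ℝ] ℝ := fun x => fderiv ℝ (fderiv ℝ f) x with hf''def
  have hiter : ∀ x v w : EuclideanSpace ℝ (Fin n), iteratedFDeriv ℝ 2 f x ![v, w] = f'' x v w := by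
    intro x v w
    rw [iteratedFDeriv_two_apply]
    simp [f'']
  have hsym2 : ∀ x v w : EuclideanSpace ℝ (Fin n), f'' x v w = f'' x w v := fun x v w =>
    second_derivative_symmetric (fun y => (hdf y).hasFDerivAt) ((hdf' x).hasFDerivAt) v w
  have hlow : ∀ x v : EuclideanSpace ℝ (Fin n), c * ‖v‖^2 ≤ f'' x v v := fun x v => by
    rw [← hiter]; exact (hHess x v).1
  have hhigh : ∀ x v : EuclideanSpace ℝ (Fin n), f'' x v v ≤ m * ‖v‖^2 := fun x v => by
    rw [← hiter]; exact (hHess x v).2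
  -- Cauchy-Schwarz for f''
  have hcs2 : ∀ x v w : EuclideanSpace ℝ (Fin n), (f'' x v w)^2 ≤ (f'' x v v) * (f'' x w w) := by
    intro x v w
    apply sq_le_of_quad
    intro t
    have h0 : (0:ℝ) ≤ c * ‖v + t • w‖^2 := by positivity
    have h1 := hlow x (v + t • w)
    have hexp : f'' x (v + t • w) (v + t • w)
        = f'' x v v + 2*t*(f'' x v w) + t^2 * (f'' x w w) := by
      rw [map_add]
      simp only [ContinuousLinearMap.add_apply, map_add, map_smul,
        ContinuousLinearMap.smul_apply, smul_eq_mul]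
      rw [hsym2 x w v]
      ring
    linarith [hexp ▸ le_trans h0 h1]
  -- operator norm bound on f''
  have hopnorm : ∀ x : EuclideanSpace ℝ (Fin n), ‖f'' x‖ ≤ m := by
    intro x
    refine ContinuousLinearMap.opNorm_le_bound _ (le_of_lt hm0) (fun v => ?_)
    refine ContinuousLinearMap.opNorm_le_bound _ (by positivity) (fun w => ?_)
    have h1 := hcs2 x v w
    have h2 := hhigh x v
    have h3 := hhigh x w
    have h4 : c * ‖v‖^2 ≤ f'' x v v := hlow x v
    have h5 : c * ‖w‖^2 ≤ f'' x w w := hlow x w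
    have hnn : (0:ℝ) ≤ ‖v‖ := norm_nonneg _
    have hnn2 : (0:ℝ) ≤ ‖w‖ := norm_nonneg _
    rw [Real.norm_eq_abs]
    have hvv0 : 0 ≤ f'' x v v := le_trans (by positivity) h4
    have hww0 : 0 ≤ f'' x w w := le_trans (by positivity) h5
    have hmul : f'' x v v * f'' x w w ≤ (m * ‖v‖ ^ 2) * (m * ‖w‖ ^ 2) :=
      mul_le_mul h2 h3 hww0 (by positivity)
    have hb2 : (f'' x v w)^2 ≤ (m * ‖v‖ * ‖w‖)^2 := by
      calc (f'' x v w)^2 ≤ f'' x v v * f'' x w w := h1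
      _ ≤ (m * ‖v‖ ^ 2) * (m * ‖w‖ ^ 2) := hmul
      _ = (m * ‖v‖ * ‖w‖)^2 := by ring
    exact abs_le_of_sq_le_sq hb2 (by positivity)
  -- gradient vs fderiv
  have hgradinner : ∀ x v : EuclideanSpace ℝ (Fin n), ⟪gradient f x, v⟫ = fderiv ℝ f x v := by
    intro x v
    rw [gradient]
    exact InnerProductSpace.toDual_symm_apply
  have hgradnorm : ∀ x : EuclideanSpace ℝ (Fin n), ‖gradient f x‖ = ‖fderiv ℝ f x‖ := by
    intro x
    exact (InnerProductSpace.toDual ℝ (EuclideanSpace ℝ (Fin n))).symm.norm_map _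
  have hfd0 : fderiv ℝ f 0 = 0 := by
    have := hgrad0
    unfold gradient at this
    have h2 := congrArg (InnerProductSpace.toDual ℝ (EuclideanSpace ℝ (Fin n))) this
    rwa [LinearIsometryEquiv.apply_symm_apply, map_zero] at h2
  -- G1 : ‖grad f x‖ ≤ m ‖x‖
  have G1 : ∀ x : EuclideanSpace ℝ (Fin n), ‖gradient f x‖ ≤ m * ‖x‖ := by
    intro x
    have := convex_univ.norm_image_sub_le_of_norm_fderiv_le
      (f := fderiv ℝ f) (fun y _ => hdf' y) (fun y _ => hopnorm y)
      (Set.mem_univ (0:EuclideanSpace ℝ (Fin n))) (Set.mem_univ x)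
    rw [hfd0, sub_zero, sub_zero] at this
    rw [hgradnorm]
    exact this
  -- G2 : c‖x‖² ≤ ⟪grad f x, x⟫
  have G2 : ∀ x : EuclideanSpace ℝ (Fin n), c * ‖x‖^2 ≤ ⟪gradient f x, x⟫ := by
    intro x
    set φ : ℝ → ℝ := fun t => fderiv ℝ f (t • x) x with hφdef
    have hder : ∀ t : ℝ, HasDerivAt φ (f'' (t • x) x x) t := by
      intro t
      have h1 : HasDerivAt (fun s : ℝ => s • x) x t := by
        simpa using (hasDerivAt_id t).smul_const x
      have h2 : HasFDerivAt (fderiv ℝ f) (f'' (t • x)) (t • x) := (hdf' (t • x)).hasFDerivAt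
      have h3 : HasDerivAt (fun s : ℝ => fderiv ℝ f (s • x)) (f'' (t • x) x) t :=
        h2.comp_hasDerivAt t h1
      have h4 := ((ContinuousLinearMap.apply ℝ ℝ x).hasFDerivAt.comp_hasDerivAt t h3)
      exact h4
    set ψ : ℝ → ℝ := fun t => φ t - c * ‖x‖^2 * t with hψdef
    have hψder : ∀ t : ℝ, HasDerivAt ψ (f'' (t • x) x x - c * ‖x‖^2) t := by
      intro t
      exact (hder t).sub ((hasDerivAt_id t).const_mul (c * ‖x‖^2) |>.congr_deriv (by ring))
    have hmono : Monotone ψ := by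
      apply monotone_of_deriv_nonneg
      · exact fun t => (hψder t).differentiableAt
      · intro t
        rw [(hψder t).deriv]
        have := hlow (t • x) x
        linarith
    have h01 := hmono (zero_le_one)
    have hψ0 : ψ 0 = 0 := by simp [ψ, φ, hfd0]
    have hψ1 : ψ 1 = fderiv ℝ f x x - c * ‖x‖^2 := by simp [ψ, φ]
    rw [hgradinner]
    rw [hψ0, hψ1] at h01
    linarith
  -- matrix machinery
  have quadeq : ∀ (M : Matrix (Fin n) (Fin n) ℝ) (y : EuclideanSpace ℝ (Fin n)),
      ⟪y, Matrix.toEuclideanLin M y⟫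
        = dotProduct (WithLp.equiv 2 (Fin n → ℝ) y) (Matrix.mulVec M (WithLp.equiv 2 (Fin n → ℝ) y)) := by
    intro M y
    rw [EuclideanSpace.inner_eq_star_dotProduct]
    simp [Matrix.toEuclideanLin_apply, dotProduct_comm]
  have normeq : ∀ y : EuclideanSpace ℝ (Fin n), dotProduct (WithLp.equiv 2 (Fin n → ℝ) y) (WithLp.equiv 2 (Fin n → ℝ) y) = ‖y‖^2 := by
    intro y
    have := real_inner_self_eq_norm_sq y
    rw [EuclideanSpace.inner_eq_star_dotProduct] at this
    simpa using this
  have Qlow : ∀ x (y : EuclideanSpace ℝ (Fin n)), c * ‖y‖^2 ≤ ⟪y, Matrix.toEuclideanLin (h x) y⟫ := by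
    intro x y
    have hp := (hbnd x).1.dotProduct_mulVec_nonneg (WithLp.equiv 2 (Fin n → ℝ) y)
    rw [Matrix.sub_mulVec, Matrix.smul_mulVec, Matrix.one_mulVec,
      dotProduct_sub, dotProduct_smul] at hp
    simp only [star_trivial, smul_eq_mul] at hp
    rw [quadeq, ← normeq y]
    linarith
  have Qhigh : ∀ x (y : EuclideanSpace ℝ (Fin n)), ⟪y, Matrix.toEuclideanLin (h x) y⟫ ≤ m * ‖y‖^2 := by
    intro x y
    have hp := (hbnd x).2.dotProduct_mulVec_nonneg (WithLp.equiv 2 (Fin n → ℝ) y)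
    rw [Matrix.sub_mulVec, Matrix.smul_mulVec, Matrix.one_mulVec,
      dotProduct_sub, dotProduct_smul] at hp
    simp only [star_trivial, smul_eq_mul] at hp
    rw [quadeq, ← normeq y]
    linarith
  have Tsymm : ∀ x (u v : EuclideanSpace ℝ (Fin n)), ⟪Matrix.toEuclideanLin (h x) u, v⟫ = ⟪u, Matrix.toEuclideanLin (h x) v⟫ :=
    fun x => (Matrix.isHermitian_iff_isSymmetric.mp (hsym x))
  -- invertibility
  have hposdef : ∀ x, (h x).PosDef := by
    intro x
    refine Matrix.posDef_iff_dotProduct_mulVec.mpr ⟨hsym x, fun z hz => ?_⟩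
    have hy : (WithLp.equiv 2 (Fin n → ℝ)).symm z ≠ 0 := by
      simpa using hz
    set y : EuclideanSpace ℝ (Fin n) := (WithLp.equiv 2 (Fin n → ℝ)).symm z with hy'
    have hzy : WithLp.equiv 2 (Fin n → ℝ) y = z := by simp [y]
    have h1 := Qlow x y
    rw [quadeq, hzy] at h1
    have h2 : (0:ℝ) < ‖y‖^2 := pow_pos (norm_pos_iff.mpr hy) 2
    have h3 : (0:ℝ) < c * ‖y‖^2 := mul_pos hc h2
    simp only [star_trivial]
    linarith
  have hTinv : ∀ x (g : EuclideanSpace ℝ (Fin n)),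
      Matrix.toEuclideanLin (h x) (Matrix.toEuclideanLin (h x)⁻¹ g) = g := by
    intro x g
    have hu : (h x) * (h x)⁻¹ = 1 :=
      Matrix.mul_nonsing_inv _ ((Matrix.isUnit_iff_isUnit_det _).mp (hposdef x).isUnit)
    apply (WithLp.equiv 2 (Fin n → ℝ)).injective
    change Matrix.toLin' (h x) (Matrix.toLin' (h x)⁻¹ (WithLp.equiv 2 (Fin n → ℝ) g)) = WithLp.equiv 2 (Fin n → ℝ) g
    rw [← Matrix.toLin'_mul_apply, hu, Matrix.toLin'_one, LinearMap.id_apply]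
  -- ‖grad‖ ≥ c‖x‖
  have Glow : ∀ x : EuclideanSpace ℝ (Fin n), c * ‖x‖ ≤ ‖gradient f x‖ := by
    intro x
    rcases eq_or_ne x 0 with rfl | hx
    · simp
    · have h1 := G2 x
      have h2 := real_inner_le_norm (gradient f x) x
      have hx0 : (0:ℝ) < ‖x‖ := norm_pos_iff.mpr hx
      have h3 : c * ‖x‖ * ‖x‖ ≤ ‖gradient f x‖ * ‖x‖ := by
        have he : c * ‖x‖ * ‖x‖ = c * ‖x‖^2 := by ring
        rw [he]; linarith
      exact le_of_mul_le_mul_right h3 hx0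
  refine ⟨hHess, ?_, ?_⟩
  · -- part (ii)
    intro x
    obtain ⟨g, hg⟩ : ∃ g', gradient f x = g' := ⟨_, rfl⟩
    obtain ⟨y, hy⟩ : ∃ y', Matrix.toEuclideanLin (h x)⁻¹ g = y' := ⟨_, rfl⟩
    have hTy : Matrix.toEuclideanLin (h x) y = g := by
      rw [← hy]; exact hTinv x g
    have hnφ : ‖φNR x‖ = ‖y‖ := by rw [hφNR x, hg, hy, norm_neg]
    rw [hnφ]
    have h1 : c * ‖y‖^2 ≤ ⟪y, g⟫ := by have := Qlow x y; rwa [hTy] at this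
    have h2 : ⟪y, g⟫ ≤ ‖g‖ * ‖y‖ := by
      rw [mul_comm]; exact real_inner_le_norm y g
    have hgle : ‖g‖ ≤ m * ‖x‖ := by rw [← hg]; exact G1 x
    rcases eq_or_lt_of_le (norm_nonneg y) with hy0 | hy0
    · rw [← hy0]
      positivity
    · have hcy : c * ‖y‖ ≤ ‖g‖ := by
        have h3 : c * ‖y‖ * ‖y‖ ≤ ‖g‖ * ‖y‖ := by
          have he : c * ‖y‖ * ‖y‖ = c * ‖y‖^2 := by ring
          rw [he]; linarith
        exact le_of_mul_le_mul_right h3 hy0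
      rw [div_mul_eq_mul_div, le_div_iff₀ hc]
      calc ‖y‖ * c = c * ‖y‖ := by ring
      _ ≤ ‖g‖ := hcy
      _ ≤ m * ‖x‖ := hgle
  · -- part (iii)
    intro x
    obtain ⟨g, hg⟩ : ∃ g', gradient f x = g' := ⟨_, rfl⟩
    obtain ⟨y, hy⟩ : ∃ y', Matrix.toEuclideanLin (h x)⁻¹ g = y' := ⟨_, rfl⟩
    have hTy : Matrix.toEuclideanLin (h x) y = g := by
      rw [← hy]; exact hTinv x g
    rw [hφNR x, hg, hy]
    have hinn : ⟪g, (-y : EuclideanSpace ℝ (Fin n))⟫ = -⟪g, y⟫ := by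
      rw [inner_neg_right]
    rw [hinn]
    have hgy : ⟪g, y⟫ = ⟪y, g⟫ := real_inner_comm _ _
    have h1 : c * ‖y‖^2 ≤ ⟪y, g⟫ := by have := Qlow x y; rwa [hTy] at this
    have hyg0 : 0 ≤ ⟪y, g⟫ := le_trans (by positivity) h1
    have hcsmat : ‖g‖^2 * ‖g‖^2 ≤ (⟪y, g⟫ * m) * ‖g‖^2 := by
      have hBcs : (⟪y, Matrix.toEuclideanLin (h x) g⟫)^2
          ≤ ⟪y, Matrix.toEuclideanLin (h x) y⟫ * ⟪g, Matrix.toEuclideanLin (h x) g⟫ := by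
        apply sq_le_of_quad
        intro t
        have h0 : (0:ℝ) ≤ c * ‖y + t • g‖^2 := by positivity
        have hq := le_trans h0 (Qlow x (y + t • g))
        have hexp : ⟪y + t • g, Matrix.toEuclideanLin (h x) (y + t • g)⟫
            = ⟪y, Matrix.toEuclideanLin (h x) y⟫ + 2*t*⟪y, Matrix.toEuclideanLin (h x) g⟫
              + t^2 * ⟪g, Matrix.toEuclideanLin (h x) g⟫ := by
          rw [map_add, map_smul]
          rw [inner_add_left, inner_add_right, inner_add_right,
            inner_smul_left, inner_smul_right, inner_smul_right, inner_smul_left]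
          have hsw : ⟪g, Matrix.toEuclideanLin (h x) y⟫ = ⟪y, Matrix.toEuclideanLin (h x) g⟫ := by
            rw [← Tsymm x y g, real_inner_comm]
          simp only [RCLike.star_def, starRingEnd_apply, star_trivial, smul_eq_mul]
          rw [hsw]
          ring
        linarith [hexp ▸ hq]
      have hyTg : ⟪y, Matrix.toEuclideanLin (h x) g⟫ = ‖g‖^2 := by
        rw [← Tsymm x y g, hTy, real_inner_self_eq_norm_sq]
      have hgTg : ⟪g, Matrix.toEuclideanLin (h x) g⟫ ≤ m * ‖g‖^2 := Qhigh x g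
      have hTyy : ⟪y, Matrix.toEuclideanLin (h x) y⟫ = ⟪y, g⟫ := by rw [hTy]
      rw [hyTg, hTyy] at hBcs
      calc ‖g‖^2 * ‖g‖^2 = (‖g‖^2)^2 := by ring
      _ ≤ ⟪y, g⟫ * ⟪g, Matrix.toEuclideanLin (h x) g⟫ := hBcs
      _ ≤ ⟪y, g⟫ * (m * ‖g‖^2) := mul_le_mul_of_nonneg_left hgTg hyg0
      _ = (⟪y, g⟫ * m) * ‖g‖^2 := by ring
    have hglow : c * ‖x‖ ≤ ‖g‖ := by rw [← hg]; exact Glow x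
    rcases eq_or_lt_of_le (norm_nonneg g) with hg0 | hg0
    · -- g = 0, hence x = 0
      have hx0 : ‖x‖ = 0 := by
        have hle : c * ‖x‖ ≤ c * 0 := by rw [mul_zero]; rw [← hg0] at hglow; linarith
        have := (mul_le_mul_iff_right₀ hc).mp hle
        exact le_antisymm this (norm_nonneg x)
      rw [hx0, hgy]
      have : -(c^2/m) * (0:ℝ)^2 = 0 := by ring
      rw [this]
      linarith
    · have hg2 : (0:ℝ) < ‖g‖^2 := pow_pos hg0 2
      have hgy1 : ‖g‖^2 ≤ ⟪y, g⟫ * m := le_of_mul_le_mul_right hcsmat hg2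
      have hgsq : c^2 * ‖x‖^2 ≤ ‖g‖^2 := by
        have := pow_le_pow_left₀ (by positivity) hglow 2
        calc c^2 * ‖x‖^2 = (c * ‖x‖)^2 := by ring
        _ ≤ ‖g‖^2 := this
      rw [hgy]
      rw [neg_mul, neg_le_neg_iff, div_mul_eq_mul_div, div_le_iff₀ hm0]
      calc c^2 * ‖x‖^2 ≤ ‖g‖^2 := hgsq
      _ ≤ ⟪y, g⟫ * m := hgy1
end

section
/- Under the Newton–Raphson setup, the origin is globally exponentially stable for the continuous-time system ẋ = φ_NR(x), and there exists ε̄ > 0 such that for every ε ∈ (0, ε̄) the origin is globally exponentially stable for the discrete-time system x(k+1) = x(k) + εφ_NR(x(k)). -/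
open RealInnerProductSpace

private lemma aux_mono {p p' p'' : ℝ → ℝ} (hp : ∀ t, HasDerivAt p (p' t) t)
    (hp' : ∀ t, HasDerivAt p' (p'' t) t) (h2 : ∀ t, 0 ≤ p'' t) :
    p 0 + p' 0 ≤ p 1 := by
  have hmono : Monotone p' := monotone_of_deriv_nonneg
    (fun t => (hp' t).differentiableAt)
    (fun t => by rw [(hp' t).deriv]; exact h2 t)
  set r : ℝ → ℝ := fun t => p t - t * p' 0 with hr_def
  have hr : ∀ t, HasDerivAt r (p' t - p' 0) t := fun t =>
    (hp t).sub (hasDerivAt_mul_const (p' 0))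
  have hdiff : Differentiable ℝ r := fun t => (hr t).differentiableAt
  have hmonoOn : MonotoneOn r (Set.Icc (0:ℝ) 1) := by
    apply monotoneOn_of_deriv_nonneg (convex_Icc 0 1) hdiff.continuous.continuousOn
      hdiff.differentiableOn
    intro t ht
    rw [interior_Icc] at ht
    rw [(hr t).deriv]
    exact sub_nonneg.2 (hmono ht.1.le)
  have h01 := hmonoOn (Set.mem_Icc.2 ⟨le_refl 0, zero_le_one⟩)
    (Set.mem_Icc.2 ⟨zero_le_one, le_refl 1⟩) zero_le_one
  simp only [hr_def] at h01
  linarith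

private lemma grad_apply {n : ℕ} (f : EuclideanSpace ℝ (Fin n) → ℝ)
    (z v : EuclideanSpace ℝ (Fin n)) :
    ⟪gradient f z, v⟫ = fderiv ℝ f z v := by
  rw [gradient]
  exact InnerProductSpace.toDual_symm_apply

private lemma aux_taylor {n : ℕ} {a b : ℝ} {f : EuclideanSpace ℝ (Fin n) → ℝ}
    (hf : ContDiff ℝ 3 f)
    (hH : ∀ x v : EuclideanSpace ℝ (Fin n),
      a * ‖v‖ ^ 2 ≤ iteratedFDeriv ℝ 2 f x ![v, v] ∧
      iteratedFDeriv ℝ 2 f x ![v, v] ≤ b * ‖v‖ ^ 2)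
    (x v : EuclideanSpace ℝ (Fin n)) :
    f x + ⟪gradient f x, v⟫ + a / 2 * ‖v‖ ^ 2 ≤ f (x + v) ∧
    f (x + v) ≤ f x + ⟪gradient f x, v⟫ + b / 2 * ‖v‖ ^ 2 := by
  have hdf : Differentiable ℝ f := hf.differentiable (by norm_num)
  have hdF : Differentiable ℝ (fderiv ℝ f) :=
    (hf.fderiv_right (m := 2) (by norm_num)).differentiable (by norm_num)
  have hline : ∀ t : ℝ, HasDerivAt (fun t : ℝ => x + t • v) v t := by
    intro t
    simpa using ((hasDerivAt_id t).smul_const v).const_add x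
  set g' : ℝ → ℝ := fun t => fderiv ℝ f (x + t • v) v with hg'_def
  set H : ℝ → ℝ := fun t => iteratedFDeriv ℝ 2 f (x + t • v) ![v, v] with hH_def
  have hg : ∀ t : ℝ, HasDerivAt (fun t : ℝ => f (x + t • v)) (g' t) t := fun t =>
    (hdf _).hasFDerivAt.comp_hasDerivAt t (hline t)
  have hg' : ∀ t : ℝ, HasDerivAt g' (H t) t := by
    intro t
    have h1 : HasDerivAt (fun t : ℝ => fderiv ℝ f (x + t • v))
        (fderiv ℝ (fderiv ℝ f) (x + t • v) v) t :=
      (hdF _).hasFDerivAt.comp_hasDerivAt t (hline t)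
    have h2 := h1.clm_apply (hasDerivAt_const t v)
    simp only [map_zero, add_zero] at h2
    have : iteratedFDeriv ℝ 2 f (x + t • v) ![v, v]
        = fderiv ℝ (fderiv ℝ f) (x + t • v) v v := by
      rw [iteratedFDeriv_two_apply]
      simp
    rw [hH_def]
    simpa [this] using h2
  have hg0 : g' 0 = ⟪gradient f x, v⟫ := by
    rw [grad_apply, hg'_def]; simp
  have e1 : f (x + (1:ℝ) • v) = f (x + v) := by rw [one_smul]
  have e0 : f (x + (0:ℝ) • v) = f x := by simp
  constructor
  · have key := aux_mono (p := fun t => f (x + t • v) - t * g' 0 - a / 2 * t ^ 2 * ‖v‖ ^ 2)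
      (p' := fun t => g' t - g' 0 - a * t * ‖v‖ ^ 2)
      (p'' := fun t => H t - a * ‖v‖ ^ 2)
      (fun t => by
        have h3 : HasDerivAt (fun t : ℝ => a / 2 * t ^ 2 * ‖v‖ ^ 2)
            (a * t * ‖v‖ ^ 2) t := by
          have := ((hasDerivAt_pow 2 t).const_mul (a / 2)).mul_const (‖v‖ ^ 2)
          exact this.congr_deriv (by push_cast; ring)
        exact ((hg t).sub (hasDerivAt_mul_const (g' 0))).sub h3)
      (fun t => by
        have h3 : HasDerivAt (fun t : ℝ => a * t * ‖v‖ ^ 2) (a * ‖v‖ ^ 2) t := by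
          have := (hasDerivAt_mul_const (a * ‖v‖ ^ 2) (x := t))
          exact this.congr_of_eventuallyEq (Filter.Eventually.of_forall fun s => by ring)
        exact (((hg' t).sub (hasDerivAt_const t (g' 0))).sub h3).congr_deriv (by ring))
      (fun t => sub_nonneg.2 (hH (x + t • v) v).1)
    simp only [e1, e0] at key
    rw [hg0] at key
    nlinarith [key]
  · have key := aux_mono (p := fun t => b / 2 * t ^ 2 * ‖v‖ ^ 2 + t * g' 0 - f (x + t • v))
      (p' := fun t => b * t * ‖v‖ ^ 2 + g' 0 - g' t)
      (p'' := fun t => b * ‖v‖ ^ 2 - H t)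
      (fun t => by
        have h3 : HasDerivAt (fun t : ℝ => b / 2 * t ^ 2 * ‖v‖ ^ 2)
            (b * t * ‖v‖ ^ 2) t := by
          have := ((hasDerivAt_pow 2 t).const_mul (b / 2)).mul_const (‖v‖ ^ 2)
          exact this.congr_deriv (by push_cast; ring)
        exact (h3.add (hasDerivAt_mul_const (g' 0))).sub (hg t))
      (fun t => by
        have h3 : HasDerivAt (fun t : ℝ => b * t * ‖v‖ ^ 2) (b * ‖v‖ ^ 2) t := by
          have := (hasDerivAt_mul_const (b * ‖v‖ ^ 2) (x := t))
          exact this.congr_of_eventuallyEq (Filter.Eventually.of_forall fun s => by ring)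
        exact ((h3.add (hasDerivAt_const t (g' 0))).sub (hg' t)).congr_deriv (by ring))
      (fun t => sub_nonneg.2 (hH (x + t • v) v).2)
    simp only [e1, e0] at key
    rw [hg0] at key
    nlinarith [key]

open Matrix in
private lemma psd_cs {N : ℕ} {A : Matrix (Fin N) (Fin N) ℝ} (hsymA : Aᵀ = A)
    (hpos : ∀ u : Fin N → ℝ, 0 ≤ u ⬝ᵥ A *ᵥ u) (u v : Fin N → ℝ) :
    (u ⬝ᵥ A *ᵥ v) ^ 2 ≤ (u ⬝ᵥ A *ᵥ u) * (v ⬝ᵥ A *ᵥ v) := by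
  have hsw : ∀ w z : Fin N → ℝ, w ⬝ᵥ A *ᵥ z = z ⬝ᵥ A *ᵥ w := by
    intro w z
    rw [Matrix.dotProduct_mulVec, ← Matrix.mulVec_transpose, hsymA, dotProduct_comm]
  have key : ∀ t : ℝ,
      0 ≤ (v ⬝ᵥ A *ᵥ v) * (t * t) + (2 * (u ⬝ᵥ A *ᵥ v)) * t + (u ⬝ᵥ A *ᵥ u) := by
    intro t
    have h0 := hpos (u + t • v)
    have hexp : (u + t • v) ⬝ᵥ A *ᵥ (u + t • v)
        = (v ⬝ᵥ A *ᵥ v) * (t * t) + (2 * (u ⬝ᵥ A *ᵥ v)) * t + (u ⬝ᵥ A *ᵥ u) := by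
      rw [Matrix.mulVec_add, Matrix.mulVec_smul]
      simp only [add_dotProduct, dotProduct_add, smul_dotProduct,
        dotProduct_smul, smul_eq_mul]
      rw [hsw v u]
      ring
    rw [hexp] at h0
    exact h0
  have hd := discrim_le_zero (by intro t; exact key t)
  rw [discrim] at hd
  nlinarith [hd]

open Matrix in
private lemma matrix_key {N : ℕ} {cc mm : ℝ} (hcc : 0 < cc) (hmm : 0 < mm)
    (A : Matrix (Fin N) (Fin N) ℝ) (hsymA : A.IsHermitian)
    (h1 : (A - cc • (1 : Matrix (Fin N) (Fin N) ℝ)).PosSemidef)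
    (h2 : (mm • (1 : Matrix (Fin N) (Fin N) ℝ) - A).PosSemidef)
    (y : Fin N → ℝ) :
    (1 / mm) * (y ⬝ᵥ y) ≤ y ⬝ᵥ (A⁻¹ *ᵥ y) ∧
      cc ^ 2 * ((A⁻¹ *ᵥ y) ⬝ᵥ (A⁻¹ *ᵥ y)) ≤ y ⬝ᵥ y := by
  have dnn : ∀ w : Fin N → ℝ, 0 ≤ w ⬝ᵥ w :=
    fun w => Finset.sum_nonneg fun i _ => mul_self_nonneg _
  have hlow : ∀ w : Fin N → ℝ, cc * (w ⬝ᵥ w) ≤ w ⬝ᵥ A *ᵥ w := by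
    intro w
    have := h1.dotProduct_mulVec_nonneg w
    simp only [Matrix.sub_mulVec, Matrix.smul_mulVec, Matrix.one_mulVec,
      dotProduct_sub, dotProduct_smul, smul_eq_mul, star_trivial] at this
    linarith
  have hup : ∀ w : Fin N → ℝ, w ⬝ᵥ A *ᵥ w ≤ mm * (w ⬝ᵥ w) := by
    intro w
    have := h2.dotProduct_mulVec_nonneg w
    simp only [Matrix.sub_mulVec, Matrix.smul_mulVec, Matrix.one_mulVec,
      dotProduct_sub, dotProduct_smul, smul_eq_mul, star_trivial] at this
    linarith
  have hAT : Aᵀ = A := by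
    rw [← Matrix.conjTranspose_eq_transpose_of_trivial]; exact hsymA
  have hpos : ∀ w : Fin N → ℝ, 0 ≤ w ⬝ᵥ A *ᵥ w := fun w =>
    le_trans (mul_nonneg hcc.le (dnn w)) (hlow w)
  have hPD : A.PosDef := by
    refine Matrix.PosDef.of_dotProduct_mulVec_pos hsymA (fun w hw => ?_)
    have hww : 0 < w ⬝ᵥ w :=
      lt_of_le_of_ne (dnn w) (Ne.symm (fun h0 => hw (dotProduct_self_eq_zero.mp h0)))
    have := hlow w
    simp only [star_trivial]
    nlinarith
  have hunit : IsUnit A.det := hPD.det_pos.ne'.isUnit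
  set u : Fin N → ℝ := A⁻¹ *ᵥ y with hu_def
  have hy : A *ᵥ u = y := by
    rw [hu_def, Matrix.mulVec_mulVec, Matrix.mul_nonsing_inv _ hunit, Matrix.one_mulVec]
  have hsw : ∀ w z : Fin N → ℝ, w ⬝ᵥ A *ᵥ z = z ⬝ᵥ A *ᵥ w := by
    intro w z
    rw [Matrix.dotProduct_mulVec, ← Matrix.mulVec_transpose, hAT, dotProduct_comm]
  have huAu : u ⬝ᵥ A *ᵥ u = y ⬝ᵥ u := by rw [hy]; exact dotProduct_comm u y
  have hyy : y ⬝ᵥ y = u ⬝ᵥ A *ᵥ y := by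
    rw [hsw u y, hy]
  constructor
  · have hcs := psd_cs hAT hpos u y
    have hub := hup y
    have hyu_nn : 0 ≤ y ⬝ᵥ u := huAu ▸ hpos u
    rcases eq_or_lt_of_le (dnn y) with h0 | h0
    · rw [← h0]
      simpa using hyu_nn
    · rw [← hyy, huAu] at hcs
      have h3 : (y ⬝ᵥ y) ^ 2 ≤ (y ⬝ᵥ u) * (mm * (y ⬝ᵥ y)) := by
        calc (y ⬝ᵥ y) ^ 2 ≤ (y ⬝ᵥ u) * (y ⬝ᵥ A *ᵥ y) := hcs
        _ ≤ (y ⬝ᵥ u) * (mm * (y ⬝ᵥ y)) := by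
          exact mul_le_mul_of_nonneg_left hub hyu_nn
      rw [div_mul_eq_mul_div, div_le_iff₀ hmm]
      nlinarith
  · have hcs : (u ⬝ᵥ y) ^ 2 ≤ (u ⬝ᵥ u) * (y ⬝ᵥ y) := by
      have := psd_cs (A := (1 : Matrix (Fin N) (Fin N) ℝ)) Matrix.transpose_one
        (fun w => by rw [Matrix.one_mulVec]; exact dnn w) u y
      simpa [Matrix.one_mulVec] using this
    have hlo : cc * (u ⬝ᵥ u) ≤ u ⬝ᵥ y := by
      have := hlow u
      rw [huAu, dotProduct_comm y u] at this
      exact this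
    rcases eq_or_lt_of_le (dnn u) with h0 | h0
    · rw [← h0]
      simpa using dnn y
    · nlinarith [dnn u, dnn y, mul_le_mul hlo hlo (by positivity) (le_trans (by positivity) hlo)]

private lemma step_arith {c m ε F2 F1 I P G : ℝ} (hc : 0 < c) (hm0 : 0 < m)
    (hε : 0 < ε) (hεm2 : ε * m ^ 2 < c ^ 2)
    (hd : F2 ≤ F1 + ε * I + m / 2 * (ε ^ 2 * P))
    (hA : G ≤ m * (-I)) (hk2 : c ^ 2 * P ≤ G) (hPL : 2 * c * F1 ≤ G)
    (hF1 : 0 ≤ F1) (hP : 0 ≤ P) (hG : 0 ≤ G) :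
    F2 ≤ (1 - ε * c / m) * F1 := by
  have t1 : m * (ε * I) ≤ -(ε * G) := by
    nlinarith [mul_le_mul_of_nonneg_left hA hε.le]
  have t2 : m * (m / 2 * (ε ^ 2 * P)) ≤ ε / 2 * G := by
    nlinarith [mul_le_mul_of_nonneg_right hεm2.le (mul_nonneg hε.le hP),
      mul_le_mul_of_nonneg_left hk2 hε.le]
  have t3 : ε * c * F1 ≤ ε / 2 * G := by
    nlinarith [mul_le_mul_of_nonneg_left hPL (le_of_lt (half_pos hε))]
  have hs : m * F2 ≤ (m - ε * c) * F1 := by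
    nlinarith [mul_le_mul_of_nonneg_left hd hm0.le]
  have heq : (1 - ε * c / m) * F1 = ((m - ε * c) * F1) / m := by
    field_simp
  rw [heq, le_div_iff₀ hm0]
  linarith

open Matrix in
/-- In the Newton–Raphson setup, the origin is globally
exponentially stable for `ẋ = φ_NR(x)`, and there is `ε̄ > 0` such that the
forward-Euler discretization is globally exponentially stable for every
`ε ∈ (0, ε̄)`. -/
theorem stmt_7 {n : ℕ} (c m : ℝ) (hc : 0 < c) (hc1 : c ≤ 1) (hm : 1 ≤ m)
    (f : EuclideanSpace ℝ (Fin n) → ℝ) (hf : ContDiff ℝ 3 f)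
    (hf0 : f 0 = 0) (hgrad0 : gradient f 0 = 0)
    (hHess : ∀ x v : EuclideanSpace ℝ (Fin n),
      c * ‖v‖ ^ 2 ≤ iteratedFDeriv ℝ 2 f x ![v, v] ∧
      iteratedFDeriv ℝ 2 f x ![v, v] ≤ m * ‖v‖ ^ 2)
    (h : EuclideanSpace ℝ (Fin n) → Matrix (Fin n) (Fin n) ℝ)
    (hsym : ∀ x, (h x).IsHermitian)
    (hbnd : ∀ x, (h x - c • (1 : Matrix (Fin n) (Fin n) ℝ)).PosSemidef ∧
      (m • (1 : Matrix (Fin n) (Fin n) ℝ) - h x).PosSemidef)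
    (φNR : EuclideanSpace ℝ (Fin n) → EuclideanSpace ℝ (Fin n))
    (hφNR : ∀ x, φNR x = -(Matrix.toEuclideanLin (h x)⁻¹ (gradient f x))) :
    (∃ M lam : ℝ, 0 < M ∧ 0 < lam ∧
      ∀ x : ℝ → EuclideanSpace ℝ (Fin n),
        (∀ t : ℝ, 0 ≤ t → HasDerivAt x (φNR (x t)) t) →
        ∀ t : ℝ, 0 ≤ t → ‖x t‖ ≤ M * ‖x 0‖ * Real.exp (-lam * t)) ∧
    (∃ εbar : ℝ, 0 < εbar ∧ ∀ ε : ℝ, 0 < ε → ε < εbar →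
      ∃ M μ : ℝ, 0 < M ∧ 0 < μ ∧ μ < 1 ∧
        ∀ x : ℕ → EuclideanSpace ℝ (Fin n),
          (∀ k : ℕ, x (k + 1) = x k + ε • φNR (x k)) →
          ∀ k : ℕ, ‖x k‖ ≤ M * ‖x 0‖ * μ ^ k) := by
  have hm0 : (0:ℝ) < m := lt_of_lt_of_le one_pos hm
  have hdf : Differentiable ℝ f := hf.differentiable (by norm_num)
  -- bridges between Euclidean inner products and dot products
  have hinner : ∀ a b : EuclideanSpace ℝ (Fin n),
      ⟪a, b⟫ = (fun i => a i) ⬝ᵥ (fun i => b i) := by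
    intro a b
    simp [PiLp.inner_apply, RCLike.inner_apply, dotProduct, mul_comm]
  have hnorm : ∀ a : EuclideanSpace ℝ (Fin n),
      ‖a‖ ^ 2 = (fun i => a i) ⬝ᵥ (fun i => a i) := by
    intro a
    rw [← real_inner_self_eq_norm_sq]
    exact hinner a a
  -- the two key estimates from the matrix bounds
  have key : ∀ z : EuclideanSpace ℝ (Fin n),
      (1 / m) * ‖gradient f z‖ ^ 2 ≤ ⟪gradient f z, -(φNR z)⟫ ∧
      c ^ 2 * ‖φNR z‖ ^ 2 ≤ ‖gradient f z‖ ^ 2 := by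
    intro z
    obtain ⟨k1, k2⟩ := matrix_key hc hm0 (h z) (hsym z) (hbnd z).1 (hbnd z).2
      (fun i => gradient f z i)
    have hφz : (fun i => (-(φNR z)) i) = (h z)⁻¹ *ᵥ (fun j => gradient f z j) := by
      funext i
      rw [hφNR z, neg_neg, Matrix.toEuclideanLin_apply]
    constructor
    · rw [hinner, hnorm, hφz]
      exact k1
    · rw [hnorm, hnorm]
      have hφz2 : (fun i => (φNR z) i) = -((h z)⁻¹ *ᵥ (fun j => gradient f z j)) := by
        funext i
        rw [hφNR z, Matrix.toEuclideanLin_apply]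
        rfl
      rw [hφz2, neg_dotProduct, dotProduct_neg, neg_neg]
      exact k2
  -- Taylor-type estimates
  have taylor := fun x v => aux_taylor hf hHess x v
  have lower : ∀ z : EuclideanSpace ℝ (Fin n), c / 2 * ‖z‖ ^ 2 ≤ f z := by
    intro z
    have := (taylor 0 z).1
    simpa [hf0, hgrad0] using this
  have upper : ∀ z : EuclideanSpace ℝ (Fin n), f z ≤ m / 2 * ‖z‖ ^ 2 := by
    intro z
    have := (taylor 0 z).2
    simpa [hf0, hgrad0] using this
  have fnn : ∀ z : EuclideanSpace ℝ (Fin n), 0 ≤ f z := fun z =>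
    le_trans (by positivity) (lower z)
  have PL : ∀ z : EuclideanSpace ℝ (Fin n), 2 * c * f z ≤ ‖gradient f z‖ ^ 2 := by
    intro z
    have h1 := (taylor z (-z)).1
    rw [show z + -z = 0 from add_neg_cancel z, hf0, inner_neg_right, norm_neg] at h1
    have h2 : ⟪gradient f z, z⟫ ≤ ‖gradient f z‖ * ‖z‖ := real_inner_le_norm _ _
    nlinarith [sq_nonneg (‖gradient f z‖ - c * ‖z‖), norm_nonneg z,
      norm_nonneg (gradient f z), hc]
  have descent : ∀ z v : EuclideanSpace ℝ (Fin n),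
      f (z + v) ≤ f z + ⟪gradient f z, v⟫ + m / 2 * ‖v‖ ^ 2 := fun z v => (taylor z v).2
  constructor
  · -- continuous time
    refine ⟨Real.sqrt (m / c), c / m, Real.sqrt_pos.2 (by positivity), by positivity, ?_⟩
    intro x hx t ht
    set lam : ℝ := c / m with hlam_def
    have hml : m * lam = c := by rw [hlam_def]; field_simp
    have hV : ∀ s : ℝ, 0 ≤ s →
        HasDerivAt (fun τ => f (x τ)) (⟪gradient f (x s), φNR (x s)⟫) s := by
      intro s hs
      have hc1' := (hdf (x s)).hasFDerivAt.comp_hasDerivAt s (hx s hs)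
      rw [grad_apply]
      exact hc1'
    have hexp : ∀ s : ℝ, HasDerivAt (fun τ => Real.exp (2 * lam * τ))
        (Real.exp (2 * lam * s) * (2 * lam)) s := by
      intro s
      have h0 : HasDerivAt (fun τ : ℝ => 2 * lam * τ) (2 * lam) s := by
        simpa using (hasDerivAt_id s).const_mul (2 * lam)
      exact h0.exp
    have hW : AntitoneOn (fun τ => f (x τ) * Real.exp (2 * lam * τ)) (Set.Ici (0:ℝ)) := by
      apply antitoneOn_of_deriv_nonpos (convex_Ici 0)
      · intro s hs
        exact (((hV s hs).continuousAt).mul (hexp s).continuousAt).continuousWithinAt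
      · intro s hs
        rw [interior_Ici] at hs
        exact (((hV s hs.le).mul (hexp s)).differentiableAt).differentiableWithinAt
      · intro s hs
        rw [interior_Ici] at hs
        have hWd : HasDerivAt (fun τ => f (x τ) * Real.exp (2 * lam * τ)) _ s :=
          (hV s hs.le).mul (hexp s)
        rw [hWd.deriv]
        have hk := (key (x s)).1
        have hI : ⟪gradient f (x s), -(φNR (x s))⟫ = -⟪gradient f (x s), φNR (x s)⟫ :=
          inner_neg_right _ _
        rw [hI] at hk
        have hPL := PL (x s)
        have hfn := fnn (x s)
        have hA : ‖gradient f (x s)‖ ^ 2 ≤ m * (-⟪gradient f (x s), φNR (x s)⟫) := by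
          calc ‖gradient f (x s)‖ ^ 2 = m * ((1 / m) * ‖gradient f (x s)‖ ^ 2) := by
                field_simp
          _ ≤ m * (-⟪gradient f (x s), φNR (x s)⟫) := mul_le_mul_of_nonneg_left hk hm0.le
        have hepos := Real.exp_pos (2 * lam * s)
        have hGe := mul_le_mul_of_nonneg_right hA hepos.le
        have hPe := mul_le_mul_of_nonneg_right hPL hepos.le
        have hmX : m * (⟪gradient f (x s), φNR (x s)⟫ * Real.exp (2 * lam * s)
            + f (x s) * (Real.exp (2 * lam * s) * (2 * lam))) ≤ m * 0 := by
          have hexpand : m * (⟪gradient f (x s), φNR (x s)⟫ * Real.exp (2 * lam * s)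
              + f (x s) * (Real.exp (2 * lam * s) * (2 * lam)))
              = m * ⟪gradient f (x s), φNR (x s)⟫ * Real.exp (2 * lam * s)
                + 2 * (m * lam) * (f (x s) * Real.exp (2 * lam * s)) := by ring
          rw [hexpand, hml, mul_zero]
          nlinarith [hGe, hPe]
        exact le_of_mul_le_mul_left hmX hm0
    have hWt := hW (Set.mem_Ici.2 (le_refl (0:ℝ))) (Set.mem_Ici.2 ht) ht
    simp only [mul_zero, Real.exp_zero, mul_one] at hWt
    have h2 : c / 2 * ‖x t‖ ^ 2 ≤ m / 2 * ‖x 0‖ ^ 2 * Real.exp (-(2 * lam * t)) := by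
      have h1 : c / 2 * ‖x t‖ ^ 2 * Real.exp (2 * lam * t) ≤ m / 2 * ‖x 0‖ ^ 2 := by
        calc c / 2 * ‖x t‖ ^ 2 * Real.exp (2 * lam * t)
            ≤ f (x t) * Real.exp (2 * lam * t) :=
              mul_le_mul_of_nonneg_right (lower (x t)) (Real.exp_nonneg _)
        _ ≤ f (x 0) := hWt
        _ ≤ m / 2 * ‖x 0‖ ^ 2 := upper (x 0)
      have h3 := mul_le_mul_of_nonneg_right h1 (Real.exp_nonneg (-(2 * lam * t)))
      rwa [mul_assoc, ← Real.exp_add, add_neg_cancel, Real.exp_zero, mul_one] at h3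
    set R : ℝ := Real.sqrt (m / c) * ‖x 0‖ * Real.exp (-lam * t) with hR_def
    have hRnn : 0 ≤ R := by positivity
    have hR2 : R ^ 2 = (m / c) * ‖x 0‖ ^ 2 * Real.exp (-(2 * lam * t)) := by
      rw [hR_def, mul_pow, mul_pow, Real.sq_sqrt (by positivity : (0:ℝ) ≤ m / c)]
      congr 1
      rw [sq, ← Real.exp_add]
      ring_nf
    have hsq : ‖x t‖ ^ 2 ≤ R ^ 2 := by
      rw [hR2]
      have h4 : c * ‖x t‖ ^ 2 ≤ c * ((m / c) * ‖x 0‖ ^ 2 * Real.exp (-(2 * lam * t))) := by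
        have he : c * ((m / c) * ‖x 0‖ ^ 2 * Real.exp (-(2 * lam * t)))
            = m * ‖x 0‖ ^ 2 * Real.exp (-(2 * lam * t)) := by
          field_simp
        rw [he]
        linarith
      exact le_of_mul_le_mul_left h4 hc
    calc ‖x t‖ = Real.sqrt (‖x t‖ ^ 2) := (Real.sqrt_sq (norm_nonneg _)).symm
    _ ≤ Real.sqrt (R ^ 2) := Real.sqrt_le_sqrt hsq
    _ = R := Real.sqrt_sq hRnn
  · -- discrete time
    refine ⟨c ^ 2 / m ^ 2, by positivity, ?_⟩
    intro ε hε hε'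
    have hεm2 : ε * m ^ 2 < c ^ 2 := by
      rw [div_eq_mul_inv] at hε'
      calc ε * m ^ 2 < c ^ 2 * (m ^ 2)⁻¹ * m ^ 2 :=
        mul_lt_mul_of_pos_right hε' (by positivity)
      _ = c ^ 2 := by field_simp
    set μ2 : ℝ := 1 - ε * c / m with hμ2_def
    have hεcm : 0 < ε * c / m := by positivity
    have hμ2lt : μ2 < 1 := by
      rw [hμ2_def]; linarith
    have hμ2pos : 0 < μ2 := by
      rw [hμ2_def]
      have hεc : ε * c < m := by nlinarith
      rw [sub_pos, div_lt_one hm0]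
      exact hεc
    refine ⟨Real.sqrt (m / c), Real.sqrt μ2, Real.sqrt_pos.2 (by positivity),
      Real.sqrt_pos.2 hμ2pos, (by
        calc Real.sqrt μ2 < Real.sqrt 1 := Real.sqrt_lt_sqrt hμ2pos.le hμ2lt
        _ = 1 := Real.sqrt_one), ?_⟩
    intro x hxrec k
    -- one step decrease
    have step : ∀ z : EuclideanSpace ℝ (Fin n),
        f (z + ε • φNR z) ≤ μ2 * f z := by
      intro z
      have hd := descent z (ε • φNR z)
      rw [real_inner_smul_right] at hd
      have hφn : ‖ε • φNR z‖ ^ 2 = ε ^ 2 * ‖φNR z‖ ^ 2 := by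
        rw [norm_smul, mul_pow, Real.norm_eq_abs, sq_abs]
      rw [hφn] at hd
      have hk1 := (key z).1
      have hI : ⟪gradient f z, -(φNR z)⟫ = -⟪gradient f z, φNR z⟫ := inner_neg_right _ _
      rw [hI] at hk1
      have hA : ‖gradient f z‖ ^ 2 ≤ m * (-⟪gradient f z, φNR z⟫) := by
        calc ‖gradient f z‖ ^ 2 = m * ((1 / m) * ‖gradient f z‖ ^ 2) := by field_simp
        _ ≤ m * (-⟪gradient f z, φNR z⟫) := mul_le_mul_of_nonneg_left hk1 hm0.le
      rw [hμ2_def]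
      exact step_arith hc hm0 hε hεm2 hd hA ((key z).2) (PL z) (fnn z)
        (by positivity) (by positivity)
    have fk : ∀ k : ℕ, f (x k) ≤ μ2 ^ k * f (x 0) := by
      intro k
      induction k with
      | zero => simp
      | succ k ih =>
        rw [hxrec k]
        calc f (x k + ε • φNR (x k)) ≤ μ2 * f (x k) := step (x k)
        _ ≤ μ2 * (μ2 ^ k * f (x 0)) := mul_le_mul_of_nonneg_left ih hμ2pos.le
        _ = μ2 ^ (k + 1) * f (x 0) := by ring
    set R : ℝ := Real.sqrt (m / c) * ‖x 0‖ * Real.sqrt μ2 ^ k with hR_def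
    have hRnn : 0 ≤ R := by positivity
    have hR2 : R ^ 2 = (m / c) * ‖x 0‖ ^ 2 * μ2 ^ k := by
      rw [hR_def, mul_pow, mul_pow, Real.sq_sqrt (by positivity : (0:ℝ) ≤ m / c),
        ← pow_mul, mul_comm k 2, pow_mul, Real.sq_sqrt hμ2pos.le]
    have hsq : ‖x k‖ ^ 2 ≤ R ^ 2 := by
      rw [hR2]
      have h1 : c / 2 * ‖x k‖ ^ 2 ≤ μ2 ^ k * (m / 2 * ‖x 0‖ ^ 2) := by
        calc c / 2 * ‖x k‖ ^ 2 ≤ f (x k) := lower (x k)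
        _ ≤ μ2 ^ k * f (x 0) := fk k
        _ ≤ μ2 ^ k * (m / 2 * ‖x 0‖ ^ 2) :=
          mul_le_mul_of_nonneg_left (upper (x 0)) (by positivity)
      have h4 : c * ‖x k‖ ^ 2 ≤ c * ((m / c) * ‖x 0‖ ^ 2 * μ2 ^ k) := by
        have he : c * ((m / c) * ‖x 0‖ ^ 2 * μ2 ^ k) = m * ‖x 0‖ ^ 2 * μ2 ^ k := by
          field_simp
        rw [he]
        nlinarith [h1]
      exact le_of_mul_le_mul_left h4 hc
    calc ‖x k‖ = Real.sqrt (‖x k‖ ^ 2) := (Real.sqrt_sq (norm_nonneg _)).symm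
    _ ≤ Real.sqrt (R ^ 2) := Real.sqrt_le_sqrt hsq
    _ = R := Real.sqrt_sq hRnn
end

section
/- In the perturbed multi-agent setup, under Assumptions 1 and 2 there exists a positive constant a_Δ such that ‖φ_x(x, χ) − φ_PNR(x)‖ ≤ a_Δ‖χ‖ for all x ∈ ℝ^{nN} and all perturbations χ = (χ^y, χ^z). -/
open RealInnerProductSpace

noncomputable section

/-- Frobenius norm of a real square matrix. -/
def frobNorm {n : ℕ} (A : Matrix (Fin n) (Fin n) ℝ) : ℝ :=
  Real.sqrt (∑ i, ∑ j, (A i j) ^ 2)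

/-- `g_i(x) := h_i(x) x − ∇f_i(x)`. -/
def gmap {n : ℕ} (f : EuclideanSpace ℝ (Fin n) → ℝ)
    (h : EuclideanSpace ℝ (Fin n) → Matrix (Fin n) (Fin n) ℝ)
    (x : EuclideanSpace ℝ (Fin n)) : EuclideanSpace ℝ (Fin n) :=
  Matrix.toEuclideanLin (h x) x - gradient f x

/-- `h̄(x) := (1/N) Σᵢ h_i(xᵢ)`. -/
def hbar {n N : ℕ} (h : Fin N → EuclideanSpace ℝ (Fin n) → Matrix (Fin n) (Fin n) ℝ)
    (xs : Fin N → EuclideanSpace ℝ (Fin n)) : Matrix (Fin n) (Fin n) ℝ :=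
  (N : ℝ)⁻¹ • ∑ i, h i (xs i)

/-- `ḡ(x) := (1/N) Σᵢ g_i(xᵢ)`. -/
def gbar {n N : ℕ} (f : Fin N → EuclideanSpace ℝ (Fin n) → ℝ)
    (h : Fin N → EuclideanSpace ℝ (Fin n) → Matrix (Fin n) (Fin n) ℝ)
    (xs : Fin N → EuclideanSpace ℝ (Fin n)) : EuclideanSpace ℝ (Fin n) :=
  (N : ℝ)⁻¹ • ∑ i, gmap (f i) (h i) (xs i)

/-- `ψ(x) := h̄(x)⁻¹ ḡ(x)`. -/
def psi {n N : ℕ} (f : Fin N → EuclideanSpace ℝ (Fin n) → ℝ)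
    (h : Fin N → EuclideanSpace ℝ (Fin n) → Matrix (Fin n) (Fin n) ℝ)
    (xs : Fin N → EuclideanSpace ℝ (Fin n)) : EuclideanSpace ℝ (Fin n) :=
  Matrix.toEuclideanLin (hbar h xs)⁻¹ (gbar f h xs)

open Classical in
/-- The thresholding operator `[z]_c`: the identity if `z ≥ (c/2)I` in the
positive-semidefinite order, and `(c/2)I` otherwise. -/
def thresh {n : ℕ} (c : ℝ) (z : Matrix (Fin n) (Fin n) ℝ) : Matrix (Fin n) (Fin n) ℝ :=
  if (z - (c / 2) • (1 : Matrix (Fin n) (Fin n) ℝ)).PosSemidef then z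
  else (c / 2) • (1 : Matrix (Fin n) (Fin n) ℝ)

/-- The perturbed multi-agent vector field `φ_x(x, χ)`, whose `i`-th block is
`−xᵢ − x* + ([χ^zᵢ + h̄(x)]_c)⁻¹ (χ^yᵢ + ḡ(x) + h̄(x) x*)`. -/
def phix {n N : ℕ} (c : ℝ) (xstar : EuclideanSpace ℝ (Fin n))
    (f : Fin N → EuclideanSpace ℝ (Fin n) → ℝ)
    (h : Fin N → EuclideanSpace ℝ (Fin n) → Matrix (Fin n) (Fin n) ℝ)
    (xs χy : Fin N → EuclideanSpace ℝ (Fin n))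
    (χz : Fin N → Matrix (Fin n) (Fin n) ℝ) : Fin N → EuclideanSpace ℝ (Fin n) :=
  fun i => -xs i - xstar +
    Matrix.toEuclideanLin (thresh c (χz i + hbar h xs))⁻¹
      (χy i + gbar f h xs + Matrix.toEuclideanLin (hbar h xs) xstar)

/-- Euclidean norm of a stacked vector in `ℝ^{nN}`. -/
def stNorm {n N : ℕ} (xs : Fin N → EuclideanSpace ℝ (Fin n)) : ℝ :=
  Real.sqrt (∑ i, ‖xs i‖ ^ 2)

/-- Norm of a perturbation `χ = (χ^y, χ^z)`: `‖χ‖² = ‖χ^y‖² + ‖χ^z‖²`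
(Frobenius norms on the matrix blocks). -/
def chiNorm {n N : ℕ} (χy : Fin N → EuclideanSpace ℝ (Fin n))
    (χz : Fin N → Matrix (Fin n) (Fin n) ℝ) : ℝ :=
  Real.sqrt ((∑ i, ‖χy i‖ ^ 2) + ∑ i, frobNorm (χz i) ^ 2)

namespace Stmt11Aux

open Matrix

variable {n : ℕ}

lemma fb_nonneg (A : Matrix (Fin n) (Fin n) ℝ) : 0 ≤ frobNorm A := Real.sqrt_nonneg _

lemma lin_apply (A : Matrix (Fin n) (Fin n) ℝ) (v : EuclideanSpace ℝ (Fin n)) (j : Fin n) :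
    Matrix.toEuclideanLin A v j = ∑ k, A j k * v k := by
  simp [Matrix.toEuclideanLin_apply, Matrix.mulVec, dotProduct]

lemma lin_mul (A B : Matrix (Fin n) (Fin n) ℝ) (v : EuclideanSpace ℝ (Fin n)) :
    Matrix.toEuclideanLin (A * B) v = Matrix.toEuclideanLin A (Matrix.toEuclideanLin B v) := by
  simp [Matrix.toEuclideanLin_apply, Matrix.mulVec_mulVec]

lemma lin_one (v : EuclideanSpace ℝ (Fin n)) :
    Matrix.toEuclideanLin (1 : Matrix (Fin n) (Fin n) ℝ) v = v := by
  simp [Matrix.toEuclideanLin_apply]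

lemma norm_sq_eq (v : EuclideanSpace ℝ (Fin n)) : ‖v‖ ^ 2 = ∑ i, (v i) ^ 2 := by
  simp [EuclideanSpace.norm_eq]
  rw [Real.sq_sqrt (by positivity)]

lemma inner_eq (v w : EuclideanSpace ℝ (Fin n)) : ⟪v, w⟫ = ∑ j, v j * w j := by
  simp [PiLp.inner_apply, RCLike.inner_apply, conj_trivial]
  exact Finset.sum_congr rfl fun _ _ => mul_comm _ _

lemma dp_inner (A : Matrix (Fin n) (Fin n) ℝ) (v : EuclideanSpace ℝ (Fin n)) :
    (fun i => v i) ⬝ᵥ (A *ᵥ fun i => v i) = ⟪v, Matrix.toEuclideanLin A v⟫ := by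
  rw [inner_eq]
  simp [dotProduct, Matrix.mulVec, lin_apply]

lemma dp_self (v : EuclideanSpace ℝ (Fin n)) :
    (fun i => v i) ⬝ᵥ (fun i => v i) = ‖v‖ ^ 2 := by
  rw [norm_sq_eq]; simp [dotProduct, sq]

/-- Lower bound on the quadratic form from a PSD shift. -/
lemma quad_ge {α : ℝ} {M : Matrix (Fin n) (Fin n) ℝ}
    (hM : (M - α • (1 : Matrix (Fin n) (Fin n) ℝ)).PosSemidef)
    (v : EuclideanSpace ℝ (Fin n)) :
    α * ‖v‖ ^ 2 ≤ ⟪v, Matrix.toEuclideanLin M v⟫ := by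
  have h0 := hM.dotProduct_mulVec_nonneg (fun i => v i)
  simp only [star_trivial, Matrix.sub_mulVec, Matrix.smul_mulVec, Matrix.one_mulVec,
    dotProduct_sub, dotProduct_smul, smul_eq_mul] at h0
  rw [dp_inner, dp_self] at h0
  linarith

lemma posdef_of {α : ℝ} (hα : 0 < α) {M : Matrix (Fin n) (Fin n) ℝ}
    (hM : (M - α • (1 : Matrix (Fin n) (Fin n) ℝ)).PosSemidef) : M.PosDef := by
  have hsm : (α • (1 : Matrix (Fin n) (Fin n) ℝ)).IsHermitian := by
    unfold Matrix.IsHermitian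
    rw [Matrix.conjTranspose_smul, Matrix.conjTranspose_one, star_trivial]
  rw [Matrix.posDef_iff_dotProduct_mulVec]
  constructor
  · have h1 := hM.1
    have : M = (M - α • 1) + α • 1 := by abel
    rw [this]; exact h1.add hsm
  · intro x hx
    have h0 := hM.dotProduct_mulVec_nonneg x
    simp only [star_trivial, Matrix.sub_mulVec, Matrix.smul_mulVec, Matrix.one_mulVec,
      dotProduct_sub, dotProduct_smul, smul_eq_mul] at h0 ⊢
    have hxx : 0 < x ⬝ᵥ x := by
      have h1 : x ⬝ᵥ x = ∑ i, (x i) ^ 2 := by simp [dotProduct, sq]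
      rw [h1]
      rcases Function.ne_iff.1 hx with ⟨i, hi⟩
      have : (0:ℝ) < (x i) ^ 2 := lt_of_le_of_ne (sq_nonneg _) (Ne.symm (pow_ne_zero 2 hi))
      exact lt_of_lt_of_le this
        (Finset.single_le_sum (fun j _ => sq_nonneg (x j)) (Finset.mem_univ i))
    nlinarith

lemma inv_bound {α : ℝ} (hα : 0 < α) {M : Matrix (Fin n) (Fin n) ℝ}
    (hM : (M - α • (1 : Matrix (Fin n) (Fin n) ℝ)).PosSemidef)
    (w : EuclideanSpace ℝ (Fin n)) :
    ‖Matrix.toEuclideanLin M⁻¹ w‖ ≤ α⁻¹ * ‖w‖ := by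
  have hpd := posdef_of hα hM
  have hdet : IsUnit M.det := (Matrix.isUnit_iff_isUnit_det M).1 hpd.isUnit
  set y := Matrix.toEuclideanLin M⁻¹ w with hy
  have hMy : Matrix.toEuclideanLin M y = w := by
    rw [hy, ← lin_mul, Matrix.mul_nonsing_inv _ hdet, lin_one]
  have h1 : α * ‖y‖ ^ 2 ≤ ⟪y, w⟫ := by
    have := quad_ge hM y; rwa [hMy] at this
  have h2 : ⟪y, w⟫ ≤ ‖y‖ * ‖w‖ := real_inner_le_norm y w
  have h3 : α * ‖y‖ ≤ ‖w‖ := by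
    rcases (norm_nonneg y).eq_or_lt' with h | h
    · rw [h]; simpa using norm_nonneg w
    · nlinarith
  calc ‖y‖ = α⁻¹ * (α * ‖y‖) := by field_simp
    _ ≤ α⁻¹ * ‖w‖ := by
        have : (0:ℝ) ≤ α⁻¹ := by positivity
        exact mul_le_mul_of_nonneg_left h3 this

lemma fb_bound (A : Matrix (Fin n) (Fin n) ℝ) (v : EuclideanSpace ℝ (Fin n)) :
    ‖Matrix.toEuclideanLin A v‖ ≤ frobNorm A * ‖v‖ := by
  have key : ‖Matrix.toEuclideanLin A v‖ ^ 2 ≤ (frobNorm A * ‖v‖) ^ 2 := by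
    rw [norm_sq_eq]
    have hterm : ∀ j : Fin n, (Matrix.toEuclideanLin A v j) ^ 2 ≤
        (∑ k, (A j k) ^ 2) * ∑ k, (v k) ^ 2 := fun j => by
      rw [lin_apply]
      exact Finset.sum_mul_sq_le_sq_mul_sq _ _ _
    calc ∑ j, (Matrix.toEuclideanLin A v j) ^ 2
        ≤ ∑ j, ((∑ k, (A j k) ^ 2) * ∑ k, (v k) ^ 2) :=
          Finset.sum_le_sum fun j _ => hterm j
      _ = (∑ j, ∑ k, (A j k) ^ 2) * ∑ k, (v k) ^ 2 := by rw [← Finset.sum_mul]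
      _ = (frobNorm A * ‖v‖) ^ 2 := by
          rw [mul_pow, norm_sq_eq]
          congr 1
          rw [frobNorm, Real.sq_sqrt (by positivity)]
  calc ‖Matrix.toEuclideanLin A v‖ = Real.sqrt (‖Matrix.toEuclideanLin A v‖ ^ 2) :=
        (Real.sqrt_sq (norm_nonneg _)).symm
    _ ≤ Real.sqrt ((frobNorm A * ‖v‖) ^ 2) := Real.sqrt_le_sqrt key
    _ = frobNorm A * ‖v‖ := Real.sqrt_sq (mul_nonneg (fb_nonneg A) (norm_nonneg v))

lemma fb_entry_le (A : Matrix (Fin n) (Fin n) ℝ) {b : ℝ} (hb : 0 ≤ b)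
    (hA : ∀ j k, |A j k| ≤ b) : frobNorm A ≤ n * b := by
  have key : ∑ j, ∑ k, (A j k) ^ 2 ≤ (n : ℝ) ^ 2 * b ^ 2 := by
    calc ∑ j, ∑ k, (A j k) ^ 2 ≤ ∑ _j : Fin n, ∑ _k : Fin n, b ^ 2 := by
          refine Finset.sum_le_sum fun j _ => Finset.sum_le_sum fun k _ => ?_
          have h1 := abs_le.1 (hA j k)
          nlinarith [h1.1, h1.2]
      _ = (n:ℝ) ^ 2 * b ^ 2 := by simp [Finset.sum_const]; ring
  calc frobNorm A ≤ Real.sqrt ((n:ℝ) ^ 2 * b ^ 2) := Real.sqrt_le_sqrt key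
    _ = n * b := by
        rw [show (n:ℝ) ^ 2 * b ^ 2 = ((n:ℝ) * b) ^ 2 by ring, Real.sqrt_sq (by positivity)]

lemma fb_neg (A : Matrix (Fin n) (Fin n) ℝ) : frobNorm (-A) = frobNorm A := by
  simp [frobNorm]

lemma quad_test (M : Matrix (Fin n) (Fin n) ℝ) (j k : Fin n) (s : ℝ) :
    (fun i => (if i = j then (1:ℝ) else 0) + s * (if i = k then 1 else 0)) ⬝ᵥ
        (M *ᵥ (fun i => (if i = j then (1:ℝ) else 0) + s * (if i = k then 1 else 0))) =
      M j j + s * M j k + s * M k j + s ^ 2 * M k k := by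
  simp [dotProduct, Matrix.mulVec, mul_add, add_mul, Finset.sum_add_distrib,
    Finset.mul_sum, ite_mul, mul_ite, Finset.sum_ite_eq, Finset.sum_ite_eq']
  ring

lemma sandwich {c m : ℝ} {M : Matrix (Fin n) (Fin n) ℝ}
    (P1 : (M - c • (1 : Matrix (Fin n) (Fin n) ℝ)).PosSemidef)
    (P2 : (m • (1 : Matrix (Fin n) (Fin n) ℝ) - M).PosSemidef) (x : Fin n → ℝ) :
    c * (x ⬝ᵥ x) ≤ x ⬝ᵥ (M *ᵥ x) ∧ x ⬝ᵥ (M *ᵥ x) ≤ m * (x ⬝ᵥ x) := by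
  have h1 := P1.dotProduct_mulVec_nonneg x
  have h2 := P2.dotProduct_mulVec_nonneg x
  simp only [star_trivial, Matrix.sub_mulVec, Matrix.smul_mulVec, Matrix.one_mulVec,
    dotProduct_sub, dotProduct_smul, smul_eq_mul] at h1 h2
  constructor <;> linarith

lemma herm_symm {M : Matrix (Fin n) (Fin n) ℝ} (hM : M.IsHermitian) (j k : Fin n) :
    M k j = M j k := by
  have := congrFun (congrFun hM.symm j) k
  simpa [Matrix.conjTranspose_apply] using this.symm

lemma entry_le {c m : ℝ} (hc : 0 ≤ c) {M : Matrix (Fin n) (Fin n) ℝ}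
    (P1 : (M - c • (1 : Matrix (Fin n) (Fin n) ℝ)).PosSemidef)
    (P2 : (m • (1 : Matrix (Fin n) (Fin n) ℝ) - M).PosSemidef) (j k : Fin n) :
    |M j k| ≤ m := by
  have hMherm : M.IsHermitian := by
    have h1 := P1.1
    have hsm : (c • (1 : Matrix (Fin n) (Fin n) ℝ)).IsHermitian := by
      unfold Matrix.IsHermitian
      rw [Matrix.conjTranspose_smul, Matrix.conjTranspose_one, star_trivial]
    have : M = (M - c • 1) + c • 1 := by abel
    rw [this]; exact h1.add hsm
  have hsym := herm_symm hMherm j k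
  set x : ℝ → (Fin n → ℝ) :=
    fun s i => (if i = j then (1:ℝ) else 0) + s * (if i = k then 1 else 0) with hx
  have hqM : ∀ s : ℝ, (x s) ⬝ᵥ (M *ᵥ x s) = M j j + s * M j k + s * M k j + s ^ 2 * M k k :=
    fun s => quad_test M j k s
  have hqI : ∀ s : ℝ, (x s) ⬝ᵥ (x s) = (1 : Matrix (Fin n) (Fin n) ℝ) j j
      + s * (1 : Matrix (Fin n) (Fin n) ℝ) j k + s * (1 : Matrix (Fin n) (Fin n) ℝ) k j
      + s ^ 2 * (1 : Matrix (Fin n) (Fin n) ℝ) k k := fun s => by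
    have hq := quad_test (1 : Matrix (Fin n) (Fin n) ℝ) j k s
    rw [Matrix.one_mulVec] at hq
    exact hq
  by_cases hjk : j = k
  · subst hjk
    have h0 := sandwich P1 P2 (x 0)
    rw [hqM 0, hqI 0] at h0
    simp [Matrix.one_apply] at h0
    rw [abs_le]
    constructor <;> nlinarith [h0.1, h0.2]
  · have h1 := sandwich P1 P2 (x 1)
    have h2 := sandwich P1 P2 (x (-1))
    have h0 := sandwich P1 P2 (x 0)
    rw [hqM 1, hqI 1] at h1
    rw [hqM (-1), hqI (-1)] at h2
    rw [hqM 0, hqI 0] at h0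
    simp [Matrix.one_apply, hjk, Ne.symm hjk] at h1 h2 h0
    rw [abs_le]
    constructor <;> nlinarith [h1.1, h1.2, h2.1, h2.2, h0.1, h0.2, hsym]

lemma smul_sum_herm {N : ℕ} (r : ℝ) (A : Fin N → Matrix (Fin n) (Fin n) ℝ)
    (hA : ∀ i, (A i).IsHermitian) : (r • ∑ i, A i).IsHermitian := by
  unfold Matrix.IsHermitian
  rw [Matrix.conjTranspose_smul, star_trivial, Matrix.conjTranspose_sum]
  congr 1
  exact Finset.sum_congr rfl fun i _ => hA i

lemma smul_one_herm (r : ℝ) : (r • (1 : Matrix (Fin n) (Fin n) ℝ)).IsHermitian := by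
  unfold Matrix.IsHermitian
  rw [Matrix.conjTranspose_smul, Matrix.conjTranspose_one, star_trivial]


lemma off_bound {n : ℕ} {c m : ℝ} (hc : 0 < c) (hc1 : c ≤ 1) (hm : 1 ≤ m)
    {M : Matrix (Fin n) (Fin n) ℝ} (hmM : ∀ j k, |M j k| ≤ m) :
    frobNorm (M - (c / 2) • (1 : Matrix (Fin n) (Fin n) ℝ)) ≤ (n : ℝ) * (2 * m) := by
  apply fb_entry_le _ (by linarith)
  intro j k
  have h1 := abs_le.1 (hmM j k)
  simp only [Matrix.sub_apply, Matrix.smul_apply, Matrix.one_apply, smul_eq_mul]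
  split_ifs with hjk
  · rw [abs_le]; constructor <;> nlinarith [h1.1, h1.2]
  · rw [abs_le]; constructor <;> nlinarith [h1.1, h1.2]

lemma thresh_lower {n : ℕ} {c : ℝ} (hc : 0 < c) {M Z : Matrix (Fin n) (Fin n) ℝ}
    (hMherm : M.IsHermitian) (hZherm : Z.IsHermitian)
    (P1 : (M - c • (1 : Matrix (Fin n) (Fin n) ℝ)).PosSemidef)
    (hcond : ¬ (Z + M - (c / 2) • (1 : Matrix (Fin n) (Fin n) ℝ)).PosSemidef) :
    c / 2 ≤ frobNorm Z := by
  have hherm2 : (Z + M - (c / 2) • (1 : Matrix (Fin n) (Fin n) ℝ)).IsHermitian :=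
    (hZherm.add hMherm).sub (smul_one_herm _)
  have hex : ¬ ∀ x : Fin n → ℝ,
      0 ≤ star x ⬝ᵥ ((Z + M - (c / 2) • 1) *ᵥ x) := fun hall => hcond (Matrix.PosSemidef.of_dotProduct_mulVec_nonneg hherm2 hall)
  push_neg at hex
  obtain ⟨x, hx⟩ := hex
  simp only [star_trivial, Matrix.sub_mulVec, Matrix.add_mulVec,
    Matrix.smul_mulVec, Matrix.one_mulVec, dotProduct_sub,
    dotProduct_add, dotProduct_smul, smul_eq_mul] at hx
  set v : EuclideanSpace ℝ (Fin n) := (WithLp.equiv 2 (Fin n → ℝ)).symm x with hv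
  have b1 : x ⬝ᵥ (Z *ᵥ x) = ⟪v, Matrix.toEuclideanLin Z v⟫ := dp_inner Z v
  have b2 : x ⬝ᵥ (M *ᵥ x) = ⟪v, Matrix.toEuclideanLin M v⟫ := dp_inner M v
  have b3 : x ⬝ᵥ x = ‖v‖ ^ 2 := dp_self v
  rw [b1, b2, b3] at hx
  have hquadM := quad_ge P1 v
  have hcs := abs_le.1 (abs_real_inner_le_norm v (Matrix.toEuclideanLin Z v))
  have hfz := fb_bound Z v
  by_contra hcon
  push_neg at hcon
  nlinarith [sq_nonneg ‖v‖, norm_nonneg v, fb_nonneg Z,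
    mul_le_mul_of_nonneg_left hfz (norm_nonneg v)]

end Stmt11Aux


namespace Stmt11Aux

open Matrix

lemma block_est {n : ℕ} {c m Kz Q : ℝ} (hc : 0 < c) (hc1 : c ≤ 1) (hm : 1 ≤ m)
    {M Z : Matrix (Fin n) (Fin n) ℝ} (hMherm : M.IsHermitian) (hZherm : Z.IsHermitian)
    (P1 : (M - c • (1 : Matrix (Fin n) (Fin n) ℝ)).PosSemidef)
    (P2 : (m • (1 : Matrix (Fin n) (Fin n) ℝ) - M).PosSemidef)
    (hKz : Kz = 2 / c * (2 * (n : ℝ) * m) + 1)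
    (hQ0 : 0 ≤ Q)
    (xv xst y gv : EuclideanSpace ℝ (Fin n))
    (hqQ : ‖Matrix.toEuclideanLin M⁻¹ (gv + Matrix.toEuclideanLin M xst)‖ ≤ Q) :
    ‖(-xv - xst + Matrix.toEuclideanLin (thresh c (Z + M))⁻¹
        (y + gv + Matrix.toEuclideanLin M xst))
      - (-xv + Matrix.toEuclideanLin M⁻¹ gv)‖
      ≤ (2 / c * (1 + Kz * Q)) * (‖y‖ + frobNorm Z) := by
  have hm0 : (0:ℝ) ≤ m := le_trans zero_le_one hm
  have h2c0 : (0:ℝ) ≤ 2 / c := div_nonneg (by norm_num) hc.le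
  have hnm0 : (0:ℝ) ≤ 2 * (n : ℝ) * m :=
    mul_nonneg (mul_nonneg (by norm_num) (Nat.cast_nonneg n)) hm0
  have hKz1 : 1 ≤ Kz := by
    have := mul_nonneg h2c0 hnm0
    rw [hKz]; linarith
  have hc2 : (0:ℝ) < c / 2 := by linarith
  have hmM : ∀ j k, |M j k| ≤ m := entry_le hc.le P1 P2
  have hMpd := posdef_of hc P1
  have hMdet : IsUnit M.det := (Matrix.isUnit_iff_isUnit_det M).1 hMpd.isUnit
  set B := thresh c (Z + M) with hBdef
  have hBpsd : (B - (c / 2) • (1 : Matrix (Fin n) (Fin n) ℝ)).PosSemidef := by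
    rw [hBdef, thresh]
    split_ifs with hcond
    · exact hcond
    · simpa using Matrix.PosSemidef.zero
  have hBpd := posdef_of hc2 hBpsd
  have hBdet : IsUnit B.det := (Matrix.isUnit_iff_isUnit_det B).1 hBpd.isUnit
  set D := M - B with hD
  set w : EuclideanSpace ℝ (Fin n) := gv + Matrix.toEuclideanLin M xst with hw
  set q : EuclideanSpace ℝ (Fin n) := Matrix.toEuclideanLin M⁻¹ w with hq
  -- Frobenius bound on D
  have hfbD : frobNorm D ≤ Kz * frobNorm Z := by
    rw [hD, hBdef, thresh]
    split_ifs with hcond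
    · rw [show M - (Z + M) = -Z from by abel, fb_neg]
      nlinarith [fb_nonneg Z, hKz1]
    · have hZge : c / 2 ≤ frobNorm Z := thresh_lower hc hMherm hZherm P1 hcond
      have hDle := off_bound hc hc1 hm hmM
      refine le_trans hDle ?_
      rw [hKz]
      nlinarith [fb_nonneg Z, hZge,
        mul_le_mul_of_nonneg_left hZge (mul_nonneg h2c0 hnm0),
        (show 2 / c * (2 * (n : ℝ) * m) * (c / 2) = 2 * (n : ℝ) * m from by field_simp)]
  -- the identity
  have e2 : B⁻¹ * ((M - B) * M⁻¹) = B⁻¹ - M⁻¹ := by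
    rw [sub_mul, Matrix.mul_nonsing_inv _ hMdet, mul_sub, mul_one, ← mul_assoc,
      Matrix.nonsing_inv_mul _ hBdet, one_mul]
  have e1 : Matrix.toEuclideanLin M⁻¹ (Matrix.toEuclideanLin M xst) = xst := by
    rw [← lin_mul, Matrix.nonsing_inv_mul _ hMdet, lin_one]
  have e3 : Matrix.toEuclideanLin B⁻¹ (Matrix.toEuclideanLin D q)
      = Matrix.toEuclideanLin B⁻¹ w - Matrix.toEuclideanLin M⁻¹ w := by
    rw [hD, hq]
    rw [← lin_mul, ← lin_mul, mul_assoc, e2, map_sub, LinearMap.sub_apply]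
  have key : (-xv - xst + Matrix.toEuclideanLin B⁻¹ (y + gv + Matrix.toEuclideanLin M xst))
      - (-xv + Matrix.toEuclideanLin M⁻¹ gv)
      = Matrix.toEuclideanLin B⁻¹ y
        + Matrix.toEuclideanLin B⁻¹ (Matrix.toEuclideanLin D q) := by
    rw [e3, hw]
    have e5 : Matrix.toEuclideanLin M⁻¹ (gv + Matrix.toEuclideanLin M xst)
        = Matrix.toEuclideanLin M⁻¹ gv + xst := by rw [map_add, e1]
    rw [show y + gv + Matrix.toEuclideanLin M xst
          = y + (gv + Matrix.toEuclideanLin M xst) from add_assoc _ _ _]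
    rw [map_add, e5]
    abel
  rw [key]
  have hLDq : ‖Matrix.toEuclideanLin D q‖ ≤ Kz * frobNorm Z * Q := by
    calc ‖Matrix.toEuclideanLin D q‖ ≤ frobNorm D * ‖q‖ := fb_bound D q
      _ ≤ Kz * frobNorm Z * Q := by
          apply mul_le_mul hfbD hqQ (norm_nonneg q)
          exact mul_nonneg (by linarith) (fb_nonneg _)
  have hic : (c / 2)⁻¹ = 2 / c := by rw [inv_div]
  calc ‖Matrix.toEuclideanLin B⁻¹ y
        + Matrix.toEuclideanLin B⁻¹ (Matrix.toEuclideanLin D q)‖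
      ≤ ‖Matrix.toEuclideanLin B⁻¹ y‖
        + ‖Matrix.toEuclideanLin B⁻¹ (Matrix.toEuclideanLin D q)‖ := norm_add_le _ _
    _ ≤ (c / 2)⁻¹ * ‖y‖ + (c / 2)⁻¹ * ‖Matrix.toEuclideanLin D q‖ :=
        add_le_add (inv_bound hc2 hBpsd _) (inv_bound hc2 hBpsd _)
    _ ≤ (2 / c) * ‖y‖ + (2 / c) * (Kz * frobNorm Z * Q) := by
        rw [hic]
        exact add_le_add le_rfl (mul_le_mul_of_nonneg_left hLDq h2c0)
    _ ≤ (2 / c * (1 + Kz * Q)) * (‖y‖ + frobNorm Z) := by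
        have hy0 := norm_nonneg y
        have hz0 := fb_nonneg Z
        have hKzQ : 0 ≤ Kz * Q := mul_nonneg (by linarith) hQ0
        nlinarith [mul_nonneg h2c0 hz0, mul_nonneg (mul_nonneg h2c0 hKzQ) hy0]

end Stmt11Aux


set_option maxHeartbeats 1000000

/-- (Lemma 1, eq. (phi_p_x_2)) There is `a_Δ > 0` with
`‖φ_x(x, χ) − φ_PNR(x)‖ ≤ a_Δ ‖χ‖` for all states and perturbations. -/
theorem stmt_11
    {n N : ℕ} (hN : 0 < N) (c m : ℝ) (hc : 0 < c) (hc1 : c ≤ 1) (hm : 1 ≤ m)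
    -- original costs, their minimizer `x*`, and the translated costs `f`
    (forig : Fin N → EuclideanSpace ℝ (Fin n) → ℝ) (hforig : ∀ i, ContDiff ℝ 3 (forig i))
    (xstar : EuclideanSpace ℝ (Fin n))
    (hminstar : ∀ y, (N : ℝ)⁻¹ * ∑ i, forig i xstar ≤ (N : ℝ)⁻¹ * ∑ i, forig i y)
    (f : Fin N → EuclideanSpace ℝ (Fin n) → ℝ)
    (hft : ∀ i y, f i y = forig i (y + xstar))
    -- Assumption 1: `cI ≤ ∇²f̄ ≤ mI` for the average of the original costs
    (hHess : ∀ x v : EuclideanSpace ℝ (Fin n),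
      c * ‖v‖ ^ 2 ≤ iteratedFDeriv ℝ 2 (fun y => (N : ℝ)⁻¹ * ∑ i, forig i y) x ![v, v] ∧
      iteratedFDeriv ℝ 2 (fun y => (N : ℝ)⁻¹ * ∑ i, forig i y) x ![v, v] ≤ m * ‖v‖ ^ 2)
    (h : Fin N → EuclideanSpace ℝ (Fin n) → Matrix (Fin n) (Fin n) ℝ)
    (hsym : ∀ i x, (h i x).IsHermitian)
    -- Assumption 2 (for the translated costs)
    (m_g a_g a_h a_ψ : ℝ) (hm_g : 0 < m_g) (ha_g : 0 < a_g) (ha_h : 0 < a_h) (ha_ψ : 0 < a_ψ)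
    (hbarbnd : ∀ xs : Fin N → EuclideanSpace ℝ (Fin n),
      (hbar h xs - c • (1 : Matrix (Fin n) (Fin n) ℝ)).PosSemidef ∧
      (m • (1 : Matrix (Fin n) (Fin n) ℝ) - hbar h xs).PosSemidef)
    (hgbnd : ∀ xs : Fin N → EuclideanSpace ℝ (Fin n), ‖gbar f h xs‖ ≤ m_g)
    (hglip : ∀ i x x', ‖gmap (f i) (h i) x - gmap (f i) (h i) x'‖ ≤ a_g * ‖x - x'‖)
    (hhlip : ∀ i x x', frobNorm (h i x - h i x') ≤ a_h * ‖x - x'‖)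
    (hψlip : ∀ xs xs' : Fin N → EuclideanSpace ℝ (Fin n),
      ‖psi f h xs - psi f h xs'‖ ≤ a_ψ * stNorm (fun i => xs i - xs' i))
    :
    ∃ a_Δ : ℝ, 0 < a_Δ ∧
      ∀ (xs χy : Fin N → EuclideanSpace ℝ (Fin n))
        (χz : Fin N → Matrix (Fin n) (Fin n) ℝ), (∀ i, (χz i).IsHermitian) →
        stNorm (fun i => phix c xstar f h xs χy χz i - (-xs i + psi f h xs)) ≤
          a_Δ * chiNorm χy χz := by
  classical
  have hm0 : (0:ℝ) ≤ m := le_trans zero_le_one hm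
  set Q : ℝ := c⁻¹ * (m_g + ((n : ℝ) * m) * ‖xstar‖) with hQdef
  set Kz : ℝ := 2 / c * (2 * (n : ℝ) * m) + 1 with hKzdef
  set K : ℝ := 2 / c * (1 + Kz * Q) with hKdef
  have h2c0 : (0:ℝ) ≤ 2 / c := div_nonneg (by norm_num) hc.le
  have hQ0 : 0 ≤ Q := by
    apply mul_nonneg (inv_nonneg.2 hc.le)
    exact add_nonneg hm_g.le (mul_nonneg (mul_nonneg (Nat.cast_nonneg n) hm0) (norm_nonneg _))
  have hnm0 : (0:ℝ) ≤ 2 * (n : ℝ) * m :=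
    mul_nonneg (mul_nonneg (by norm_num) (Nat.cast_nonneg n)) hm0
  have hKz1 : 1 ≤ Kz := by
    have := mul_nonneg h2c0 hnm0
    rw [hKzdef]; linarith
  have hK0 : 0 < K := by
    rw [hKdef]
    have h1 : (0:ℝ) < 2 / c := div_pos (by norm_num) hc
    have h2 : 0 ≤ Kz * Q := mul_nonneg (by linarith) hQ0
    exact mul_pos h1 (by linarith)
  refine ⟨Real.sqrt 2 * K, mul_pos (Real.sqrt_pos.2 (by norm_num)) hK0, ?_⟩
  intro xs χy χz hherm
  obtain ⟨P1, P2⟩ := hbarbnd xs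
  have hMherm : (hbar h xs).IsHermitian := by
    rw [hbar]; exact Stmt11Aux.smul_sum_herm _ _ fun i => hsym i (xs i)
  have hmM : ∀ j k, |hbar h xs j k| ≤ m := Stmt11Aux.entry_le hc.le P1 P2
  have hfbM : frobNorm (hbar h xs) ≤ (n : ℝ) * m := Stmt11Aux.fb_entry_le _ hm0 hmM
  have hqQ : ‖Matrix.toEuclideanLin (hbar h xs)⁻¹
      (gbar f h xs + Matrix.toEuclideanLin (hbar h xs) xstar)‖ ≤ Q := by
    refine le_trans (Stmt11Aux.inv_bound hc P1 _) ?_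
    rw [hQdef]
    refine mul_le_mul_of_nonneg_left ?_ (inv_nonneg.2 hc.le)
    calc ‖gbar f h xs + Matrix.toEuclideanLin (hbar h xs) xstar‖
        ≤ ‖gbar f h xs‖ + ‖Matrix.toEuclideanLin (hbar h xs) xstar‖ := norm_add_le _ _
      _ ≤ m_g + ((n : ℝ) * m) * ‖xstar‖ := add_le_add (hgbnd xs)
          (le_trans (Stmt11Aux.fb_bound _ xstar)
            (mul_le_mul_of_nonneg_right hfbM (norm_nonneg _)))
  have hblock : ∀ i, ‖phix c xstar f h xs χy χz i - (-xs i + psi f h xs)‖ ≤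
      K * (‖χy i‖ + frobNorm (χz i)) := by
    intro i
    have hb := Stmt11Aux.block_est hc hc1 hm hMherm (hherm i) P1 P2 hKzdef hQ0
      (xs i) xstar (χy i) (gbar f h xs) hqQ
    rw [hKdef]
    exact hb
  simp only [stNorm, chiNorm]
  set S : ℝ := (∑ i, ‖χy i‖ ^ 2) + ∑ i, frobNorm (χz i) ^ 2 with hS
  have hsum : ∑ i, ‖phix c xstar f h xs χy χz i - (-xs i + psi f h xs)‖ ^ 2
      ≤ 2 * K ^ 2 * S := by
    have hterm : ∀ i, ‖phix c xstar f h xs χy χz i - (-xs i + psi f h xs)‖ ^ 2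
        ≤ 2 * K ^ 2 * (‖χy i‖ ^ 2 + frobNorm (χz i) ^ 2) := by
      intro i
      have hb := hblock i
      have hy0 := norm_nonneg (χy i)
      have hz0 := Stmt11Aux.fb_nonneg (χz i)
      have hd0 := norm_nonneg (phix c xstar f h xs χy χz i - (-xs i + psi f h xs))
      nlinarith [sq_nonneg (‖χy i‖ - frobNorm (χz i)), hK0.le,
        mul_le_mul hb hb hd0 (mul_nonneg hK0.le (by linarith))]
    calc ∑ i, ‖phix c xstar f h xs χy χz i - (-xs i + psi f h xs)‖ ^ 2
        ≤ ∑ i, 2 * K ^ 2 * (‖χy i‖ ^ 2 + frobNorm (χz i) ^ 2) :=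
          Finset.sum_le_sum fun i _ => hterm i
      _ = 2 * K ^ 2 * S := by
          rw [hS, ← Finset.mul_sum, Finset.sum_add_distrib]
  calc Real.sqrt (∑ i, ‖phix c xstar f h xs χy χz i - (-xs i + psi f h xs)‖ ^ 2)
      ≤ Real.sqrt (2 * K ^ 2 * S) := Real.sqrt_le_sqrt hsum
    _ = Real.sqrt 2 * K * Real.sqrt S := by
        rw [Real.sqrt_mul (by positivity) S, Real.sqrt_mul (by norm_num : (0:ℝ) ≤ 2),
          Real.sqrt_sq hK0.le]

end
end
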